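/- arXiv:1308.3012 — 4 statements merged into one kernel-verified Lean document; each statement's English description precedes it below -/
import Mathlib

section
/- Let (λ, s, t) be a doubly marked partition and define α = (λ_1 − t + s − 1, ..., λ_{λ'_s} − t + s − 1, λ_{λ'_s + 1}, ..., λ_ℓ) and β = (λ'_s, λ'_{s+1}, ..., λ'_t). Then α is a partition (weakly decreasing with nonnegative parts), β is a partition all of whose parts are equal, and |α| + |β| = |λ|. -/
open Finset

/-- The `i`-th part (1-indexed) of a partition given as a weakly decreasing list;
`0` if `i` is out of range. -/
def part (l : List ℕ) (i : ℕ) : ℕ := l.getD (i - 1) 0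

/-- `conj l s = λ'_s`, the `s`-th part of the conjugate partition:
the number of parts of `l` that are at least `s`. -/
def conj (l : List ℕ) (s : ℕ) : ℕ := l.countP (fun x => s ≤ x)

/-- A partition represented as a weakly decreasing list of positive integers. -/
def IsPartitionList (l : List ℕ) : Prop := l.Pairwise (· ≥ ·) ∧ ∀ x ∈ l, 0 < x

/-- The side `D(λ)` of the Durfee square: the number of indices `i` with `λ_i ≥ i`. -/
def durfee (l : List ℕ) : ℕ := (List.range l.length).countP (fun i => i + 1 ≤ l.getD i 0)

/-- A doubly marked partition `(λ, s, t)`: `1 ≤ s ≤ D(λ)`, `s ≤ t ≤ λ_1`, `λ'_s = λ'_t`. -/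
def IsDoublyMarked (l : List ℕ) (s t : ℕ) : Prop :=
  IsPartitionList l ∧ 1 ≤ s ∧ s ≤ durfee l ∧ s ≤ t ∧ t ≤ part l 1 ∧ conj l s = conj l t

/-- `g(λ,s,t) = λ'_s - s + 1` (here `s ≤ λ'_s`, so natural subtraction is exact). -/
def sptg (l : List ℕ) (s : ℕ) : ℕ := conj l s - s + 1

/-- The spt-crank `c(λ,s,t) = g - λ_g + t - s`. -/
def sptCrank (l : List ℕ) (s t : ℕ) : ℤ :=
  (sptg l s : ℤ) - part l (sptg l s) + (t : ℤ) - s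

/-- The partition `p` of `n` written as a weakly decreasing list. -/
def toList {n : ℕ} (p : n.Partition) : List ℕ := (p.parts.sort (· ≤ ·)).reverse

/-- The smallest part of a partition of `n` (`0` for the empty partition). -/
def smin {n : ℕ} (p : n.Partition) : ℕ := (p.parts.sort (· ≤ ·)).headD 0

/-- `spt n = Σ_{λ ⊢ n} n_s(λ)`: the total number of occurrences of smallest parts. -/
def spt (n : ℕ) : ℕ := ∑ p : n.Partition, p.parts.count (smin p)

/-- The map `ψ`: `α = (λ_1 - t + s - 1, …, λ_{λ'_s} - t + s - 1, λ_{λ'_s+1}, …, λ_ℓ)`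
(as a list of integers) and `β = (λ'_s, λ'_{s+1}, …, λ'_t)`. -/
def psi (l : List ℕ) (s t : ℕ) : List ℤ × List ℕ :=
  ((l.take (conj l s)).map (fun x => (x : ℤ) - t + s - 1) ++
     (l.drop (conj l s)).map (fun x => (x : ℤ)),
   (List.range (t - s + 1)).map (fun i => conj l (s + i)))

lemma sorted_getElem_anti {l : List ℕ} (hs : l.Pairwise (· ≥ ·)) {i j : ℕ}
    (hij : i ≤ j) (hj : j < l.length) : l[j] ≤ l[i]'(lt_of_le_of_lt hij hj) := by
  rcases eq_or_lt_of_le hij with rfl | hlt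
  · exact le_refl _
  · exact List.pairwise_iff_getElem.mp hs i j _ hj hlt

lemma sorted_getD_anti {l : List ℕ} (hs : l.Pairwise (· ≥ ·)) {i j : ℕ} (hij : i ≤ j) :
    l.getD j 0 ≤ l.getD i 0 := by
  by_cases hj : j < l.length
  · rw [List.getD_eq_getElem _ _ hj, List.getD_eq_getElem _ _ (lt_of_le_of_lt hij hj)]
    exact sorted_getElem_anti hs hij hj
  · rw [List.getD_eq_default _ _ (le_of_not_gt hj)]
    exact Nat.zero_le _

lemma lt_countP_of {l : List ℕ} (hs : l.Pairwise (· ≥ ·)) {s i : ℕ} (hi : i < l.length)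
    (hx : s ≤ l[i]) : i < l.countP (fun x => s ≤ x) := by
  have h1 : l.countP (fun x => s ≤ x) =
      (l.take (i+1)).countP (fun x => s ≤ x) + (l.drop (i+1)).countP (fun x => s ≤ x) := by
    rw [← List.countP_append, List.take_append_drop]
  have h2 : (l.take (i+1)).countP (fun x => s ≤ x) = (l.take (i+1)).length := by
    rw [List.countP_eq_length]
    intro a ha
    rw [List.mem_iff_getElem] at ha
    obtain ⟨j, hj, rfl⟩ := ha
    have hj' : j < i + 1 := lt_of_lt_of_le hj (by simp [List.length_take])
    rw [List.getElem_take]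
    simpa using le_trans hx (sorted_getElem_anti hs (Nat.lt_succ_iff.mp hj') hi)
  have h3 : (l.take (i+1)).length = i + 1 := by
    rw [List.length_take]; omega
  omega

lemma countP_le_of {l : List ℕ} (hs : l.Pairwise (· ≥ ·)) {s i : ℕ} (hi : i < l.length)
    (hx : ¬ s ≤ l[i]) : l.countP (fun x => s ≤ x) ≤ i := by
  have h1 : l.countP (fun x => s ≤ x) =
      (l.take i).countP (fun x => s ≤ x) + (l.drop i).countP (fun x => s ≤ x) := by
    rw [← List.countP_append, List.take_append_drop]
  have h2 : (l.drop i).countP (fun x => s ≤ x) = 0 := by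
    rw [List.countP_eq_zero]
    intro a ha
    rw [List.mem_iff_getElem] at ha
    obtain ⟨j, hj, rfl⟩ := ha
    rw [List.getElem_drop]
    have : l[i + j]'(by simp [List.length_drop] at hj; omega) ≤ l[i] :=
      sorted_getElem_anti hs (Nat.le_add_right _ _) _
    simp only [decide_eq_true_eq]
    omega
  have h3 : (l.take i).countP (fun x => s ≤ x) ≤ i := by
    calc _ ≤ (l.take i).length := List.countP_le_length
    _ ≤ i := by simp [List.length_take]
  omega

lemma lt_countP_iff {l : List ℕ} (hs : l.Pairwise (· ≥ ·)) {s i : ℕ} (hi : i < l.length) :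
    i < l.countP (fun x => s ≤ x) ↔ s ≤ l[i] := by
  constructor
  · intro h
    by_contra hx
    exact absurd (countP_le_of hs hi hx) (by omega)
  · exact lt_countP_of hs hi

lemma le_getD_of_le_durfee {l : List ℕ} (hs : l.Pairwise (· ≥ ·)) {s : ℕ}
    (h1 : 1 ≤ s) (h2 : s ≤ (List.range l.length).countP (fun i => i + 1 ≤ l.getD i 0)) :
    s ≤ l.getD (s-1) 0 := by
  by_contra hlt
  push_neg at hlt
  set n := l.length
  have hsplit : (List.range n).countP (fun i => i + 1 ≤ l.getD i 0) =
      ((List.range n).take (s-1)).countP (fun i => i + 1 ≤ l.getD i 0) +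
      ((List.range n).drop (s-1)).countP (fun i => i + 1 ≤ l.getD i 0) := by
    rw [← List.countP_append, List.take_append_drop]
  have hA : ((List.range n).take (s-1)).countP (fun i => i + 1 ≤ l.getD i 0) ≤ s - 1 := by
    calc _ ≤ ((List.range n).take (s-1)).length := List.countP_le_length
    _ ≤ s - 1 := by simp [List.length_take]
  have hB : ((List.range n).drop (s-1)).countP (fun i => i + 1 ≤ l.getD i 0) = 0 := by
    rw [List.countP_eq_zero]
    intro a ha
    rw [List.mem_iff_getElem] at ha
    obtain ⟨j, hj, rfl⟩ := ha
    rw [List.getElem_drop, List.getElem_range]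
    have hmono : l.getD (s-1+j) 0 ≤ l.getD (s-1) 0 := sorted_getD_anti hs (Nat.le_add_right _ _)
    simp only [decide_eq_true_eq]
    omega
  omega

lemma le_conj_of_le_durfee {l : List ℕ} (hs : l.Pairwise (· ≥ ·)) {s : ℕ}
    (h1 : 1 ≤ s) (h2 : s ≤ (List.range l.length).countP (fun i => i + 1 ≤ l.getD i 0)) :
    s ≤ l.countP (fun x => s ≤ x) := by
  have hg := le_getD_of_le_durfee hs h1 h2
  have hlen : s - 1 < l.length := by
    by_contra hc
    rw [List.getD_eq_default _ _ (le_of_not_gt hc)] at hg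
    omega
  have hx : s ≤ l[s-1] := by rw [← List.getD_eq_getElem l 0 hlen]; exact hg
  have := lt_countP_of (s := s) hs hlen hx
  omega

lemma sum_map_cast_sub (l : List ℕ) (k : ℤ) :
    (l.map (fun x : ℕ => (x : ℤ) - k)).sum = (l.sum : ℤ) - l.length * k := by
  induction l with
  | nil => simp
  | cons a tl ih =>
    simp only [List.map_cons, List.sum_cons, List.length_cons, ih]
    push_cast; ring

lemma coe_list (m : List ℕ) : (do let a ← m; pure ((a:ℤ))) = m.map (fun x : ℕ => (x:ℤ)) := by
  induction m with
  | nil => rfl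
  | cons a tl ih => simp only [List.pure_def, List.bind_eq_flatMap, List.flatMap_cons,
      List.map_cons] at *; rw [ih]; rfl

lemma psi_fst (l : List ℕ) (s t : ℕ) :
    (psi l s t).1 = (l.take (conj l s)).map (fun x : ℕ => (x:ℤ) - t + s - 1) ++
      (l.drop (conj l s)).map (fun x : ℕ => (x:ℤ)) := by
  simp only [psi, coe_list, List.map_map]
  rfl

/-- For a doubly marked partition `(λ,s,t)` with `(α,β) = ψ(λ,s,t)`: `α` is a partition
(weakly decreasing, nonnegative parts), `β` is a partition all of whose parts are equal,
and `|α| + |β| = |λ|`. -/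
theorem psi_image_properties (l : List ℕ) (s t : ℕ) (h : IsDoublyMarked l s t) :
    (psi l s t).1.Pairwise (· ≥ ·) ∧ (∀ x ∈ (psi l s t).1, 0 ≤ x) ∧
    (∀ x ∈ (psi l s t).2, 0 < x) ∧ (∃ c, ∀ x ∈ (psi l s t).2, x = c) ∧
    (psi l s t).1.sum + ((psi l s t).2.sum : ℤ) = (l.sum : ℤ) := by
  obtain ⟨⟨hs, hpos⟩, hs1, hsd, hst, htl, hconj⟩ := h
  rw [durfee] at hsd
  have hsc : s ≤ conj l s := le_conj_of_le_durfee hs hs1 hsd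
  set c := conj l s with hc
  have hcle : c ≤ l.length := List.countP_le_length
  have hc1 : 1 ≤ c := le_trans hs1 hsc
  -- parts in the first block are at least t
  have htake : ∀ x ∈ l.take c, t ≤ x := by
    intro x hx
    rw [List.mem_iff_getElem] at hx
    obtain ⟨i, hi, rfl⟩ := hx
    have hi' : i < c := lt_of_lt_of_le hi (by simp [List.length_take])
    have hilen : i < l.length := lt_of_lt_of_le hi' hcle
    rw [List.getElem_take]
    refine (lt_countP_iff hs hilen).mp ?_
    have h2 : i < conj l t := hconj ▸ hi'
    exact h2
  -- parts in the second block are less than s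
  have hdrop : ∀ x ∈ l.drop c, x < s := by
    intro x hx
    rw [List.mem_iff_getElem] at hx
    obtain ⟨i, hi, rfl⟩ := hx
    have hlen : c + i < l.length := by simp [List.length_drop] at hi; omega
    rw [List.getElem_drop]
    have hni : ¬ (c + i < l.countP (fun x => s ≤ x)) := by
      rw [hc, conj] at *; omega
    have := (lt_countP_iff (s := s) hs hlen).not.mp hni
    omega
  -- all parts of β equal c
  have hbeta : ∀ x ∈ (psi l s t).2, x = c := by
    intro x hx
    simp only [psi, List.mem_map, List.mem_range] at hx
    obtain ⟨i, hi, rfl⟩ := hx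
    have h1 : conj l (s + i) ≤ conj l s :=
      List.countP_mono_left (fun x _ hx => by
        simp only [decide_eq_true_eq] at *; omega)
    have h2 : conj l t ≤ conj l (s + i) :=
      List.countP_mono_left (fun x _ hx => by
        simp only [decide_eq_true_eq] at *; omega)
    rw [← hc] at h1
    rw [← hconj] at h2
    omega
  refine ⟨?_, ?_, ?_, ⟨c, hbeta⟩, ?_⟩
  · -- sorted
    rw [psi_fst, List.pairwise_append]
    refine ⟨?_, ?_, ?_⟩
    · exact (List.Pairwise.sublist (List.take_sublist c l) hs).map _ (fun a b hab => by
        simp only [ge_iff_le] at *; omega)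
    · exact (List.Pairwise.sublist (List.drop_sublist c l) hs).map _ (fun a b hab => by
        simp only [ge_iff_le] at *; exact_mod_cast hab)
    · intro a ha b hb
      simp only [List.mem_map] at ha hb
      obtain ⟨x, hx, rfl⟩ := ha
      obtain ⟨y, hy, rfl⟩ := hb
      have h1 := htake x hx
      have h2 := hdrop y hy
      simp only [ge_iff_le]
      omega
  · -- nonneg
    intro x hx
    rw [psi_fst, List.mem_append] at hx
    rcases hx with hx | hx
    · simp only [List.mem_map] at hx
      obtain ⟨y, hy, rfl⟩ := hx
      have := htake y hy
      omega
    · simp only [List.mem_map] at hx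
      obtain ⟨y, _, rfl⟩ := hx
      exact Int.natCast_nonneg y
  · -- β positive
    intro x hx
    rw [hbeta x hx]
    omega
  · -- sums
    have hrepl : (psi l s t).2 = List.replicate (t - s + 1) c := by
      rw [List.eq_replicate_iff]
      exact ⟨by simp [psi], hbeta⟩
    have hbsum : (psi l s t).2.sum = (t - s + 1) * c := by
      rw [hrepl, List.sum_replicate, smul_eq_mul]
    have hf : (l.take c).map (fun x : ℕ => (x : ℤ) - t + s - 1) =
        (l.take c).map (fun x : ℕ => (x : ℤ) - ((t - s + 1 : ℕ) : ℤ)) :=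
      List.map_congr_left (fun x _ => by push_cast [hst]; ring)
    have hlen : (l.take c).length = c := by simp [List.length_take]; omega
    have hTD : (l.take c).sum + (l.drop c).sum = l.sum := by
      rw [← List.sum_append, List.take_append_drop]
    rw [psi_fst, List.sum_append, hf, sum_map_cast_sub, hlen, ← Nat.cast_list_sum, hbsum,
      ← hTD]
    push_cast [hst]
    ring
end

section
/- If (λ, s, t) is a doubly marked partition with spt-crank m and (α, β) = ψ(λ,s,t), then m belongs to the rank-set of α, i.e., there exists g ≥ 1 with g − 1 − α_g = m. -/
open Finset

theorem coeListEq (L : List ℕ) :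
    (do let a ← L; pure ((a:ℤ))) = L.map (fun a : ℕ => (a:ℤ)) := by
  induction L with
  | nil => rfl
  | cons a L ih => simpa using ih

theorem durfee_prefix (l : List ℕ) (hs : l.Pairwise (· ≥ ·)) (i : ℕ) (hi : i < durfee l) :
    i + 1 ≤ l.getD i 0 := by
  by_contra hP
  have hlt : ∀ j < l.length, j + 1 ≤ l.getD j 0 → j < i := by
    intro j hj hPj
    by_contra hji
    push_neg at hji
    apply hP
    have hil : i < l.length := lt_of_le_of_lt hji hj
    have : l.getD j 0 ≤ l.getD i 0 := by
      rw [List.getD_eq_getElem _ _ hj, List.getD_eq_getElem _ _ hil]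
      exact hs.rel_get_of_le (a := ⟨i, hil⟩) (b := ⟨j, hj⟩) (by simpa using hji)
    omega
  have hsub : (List.range l.length).filter (fun j => j + 1 ≤ l.getD j 0) ⊆ List.range i := by
    intro j hj
    rw [List.mem_filter, List.mem_range] at hj
    rw [List.mem_range]
    exact hlt j hj.1 (by simpa using hj.2)
  have hnd : ((List.range l.length).filter (fun j => j + 1 ≤ l.getD j 0)).Nodup :=
    List.nodup_range.filter _
  have hle := (List.subperm_of_subset hnd hsub).length_le
  rw [List.length_range] at hle
  rw [durfee, List.countP_eq_length_filter] at hi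
  omega

theorem le_conj_of_le_durfee_s10 (l : List ℕ) (s : ℕ) (hs : l.Pairwise (· ≥ ·)) (h1 : 1 ≤ s)
    (hd : s ≤ durfee l) : s ≤ conj l s := by
  have hdl : durfee l ≤ l.length := by
    have := List.countP_le_length (l := List.range l.length)
      (p := fun i => decide (i + 1 ≤ l.getD i 0))
    rw [List.length_range] at this
    exact this
  have hsl : s ≤ l.length := le_trans hd hdl
  have hkey : ∀ i (hil : i < l.length), i < s → s ≤ l[i] := by
    intro i hil his
    have h1' : s - 1 < durfee l := by omega
    have h2 := durfee_prefix l hs (s - 1) h1'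
    have hs1l : s - 1 < l.length := by omega
    rw [List.getD_eq_getElem _ _ hs1l] at h2
    have : l[s-1] ≤ l[i] := hs.rel_get_of_le (a := ⟨i, hil⟩) (b := ⟨s-1, hs1l⟩) (by simp; omega)
    omega
  have htake : (l.take s).countP (fun x => s ≤ x) = (l.take s).length := by
    rw [List.countP_eq_length]
    intro x hx
    rw [List.mem_iff_getElem] at hx
    obtain ⟨i, hi, rfl⟩ := hx
    have hi' : i < s := lt_of_lt_of_le hi (by simp)
    rw [List.getElem_take]
    simpa using hkey i (by simp at hi; omega) hi'
  have : conj l s = (l.take s).countP (fun x => s ≤ x) + (l.drop s).countP (fun x => s ≤ x) := by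
    rw [conj, ← List.countP_append, List.take_append_drop]
  rw [this, htake, List.length_take]
  omega

/-- If `(λ,s,t)` is a doubly marked partition with spt-crank `m` and `(α,β) = ψ(λ,s,t)`,
then `m` belongs to the rank-set of `α`: there is a `g ≥ 1` with `g - 1 - α_g = m`. -/
theorem mem_rankSet_of_sptCrank (l : List ℕ) (s t : ℕ) (m : ℤ)
    (h : IsDoublyMarked l s t) (hc : sptCrank l s t = m) :
    ∃ g : ℕ, 1 ≤ g ∧ (g : ℤ) - 1 - (psi l s t).1.getD (g - 1) 0 = m := by
  obtain ⟨⟨hsort, hpos⟩, h1s, hsd, hst, ht1, hconj⟩ := h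
  set c := conj l s with hcdef
  have hsc : s ≤ c := le_conj_of_le_durfee_s10 l s hsort h1s hsd
  have hcl : c ≤ l.length := List.countP_le_length
  refine ⟨c - s + 1, by omega, ?_⟩
  have hidx : c - s + 1 - 1 = c - s := by omega
  have hcs : c - s < c := by omega
  have hcsl : c - s < l.length := by omega
  have hget : (psi l s t).1.getD (c - s + 1 - 1) 0 = (l[c - s] : ℤ) - t + s - 1 := by
    rw [hidx]
    simp only [psi]
    rw [coeListEq, List.map_map]
    rw [List.getD_append _ _ _ _
      (by rw [List.length_map, List.length_take]; omega)]
    rw [List.getD_eq_getElem _ _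
      (by rw [List.length_map, List.length_take]; omega)]
    simp [List.getElem_take]
  rw [hget]
  have hm : m = (sptg l s : ℤ) - part l (sptg l s) + (t : ℤ) - s := hc.symm
  have hg : sptg l s = c - s + 1 := rfl
  have hpart : part l (sptg l s) = l[c - s] := by
    rw [hg, part, hidx, List.getD_eq_getElem _ _ hcsl]
  rw [hpart, hg] at hm
  rw [hm]
  push_cast
  omega
end

section
/- Let λ be a partition, s an integer with 1 ≤ s ≤ D(λ), and t an integer with 1 ≤ t ≤ λ_1 such that either t < s or λ'_s > λ'_t (i.e., (λ,s,t) is not a doubly marked partition). Let p be the maximal integer with λ'_p = λ'_s, δ = (λ_1 − p + s − 1, ..., λ_{λ'_s} − p + s − 1, λ_{λ'_s+1}, ..., λ_ℓ), a the minimal integer with δ_a < λ'_s, and μ = (δ_1, ..., δ_{a−1}, λ'_s, ..., λ'_p, δ_a, ..., δ_ℓ). Then μ is a partition of |λ| and 1 ≤ a ≤ D(μ). -/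
open Finset

lemma filter_range_eq (q : ℕ → Bool) :
    ∀ n, (∀ i j, i ≤ j → j < n → q j = true → q i = true) →
      (List.range n).filter q = List.range ((List.range n).countP q) := by
  intro n
  induction n with
  | zero => simp
  | succ n ih =>
    intro hq
    rw [List.range_succ, List.filter_append, List.countP_append]
    by_cases hn : q n = true
    · have h1 : (List.range n).filter q = List.range n := by
        apply List.filter_eq_self.2
        intro a ha
        exact hq a n (Nat.le_of_lt (List.mem_range.1 ha)) (Nat.lt_succ_self n) hn
      have h2 : (List.range n).countP q = n := by
        rw [List.countP_eq_length_filter, h1, List.length_range]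
      simp [hn, h1, h2, List.range_succ]
    · have h3 := ih (fun i j hij hj => hq i j hij (Nat.lt_succ_of_lt hj))
      simp [hn, h3]

lemma lt_countP_range_iff {q : ℕ → Bool} {n : ℕ}
    (hq : ∀ i j, i ≤ j → j < n → q j = true → q i = true) (i : ℕ) :
    i < (List.range n).countP q ↔ i < n ∧ q i = true := by
  rw [← List.mem_range (n := (List.range n).countP q), ← filter_range_eq q n hq,
    List.mem_filter, List.mem_range]

lemma countP_eq_countP_range (q : ℕ → Bool) :
    ∀ l : List ℕ, l.countP q = (List.range l.length).countP (fun i => q (l.getD i 0))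
  | [] => by simp
  | a :: l => by
    rw [List.countP_cons, List.length_cons, List.range_succ_eq_map, List.countP_cons,
      List.countP_map]
    simp only [List.getD_cons_zero, Function.comp_def, List.getD_cons_succ]
    rw [countP_eq_countP_range q l]

lemma sorted_getD {l : List ℕ} (hl : l.Pairwise (· ≥ ·)) {i j : ℕ} (hij : i ≤ j)
    (hj : j < l.length) : l.getD j 0 ≤ l.getD i 0 := by
  rcases eq_or_lt_of_le hij with rfl | hij
  · exact le_refl _
  · rw [List.getD_eq_getElem l 0 hj, List.getD_eq_getElem l 0 (lt_trans hij hj)]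
    exact List.pairwise_iff_get.1 hl ⟨i, _⟩ ⟨j, _⟩ hij

lemma lt_conj_iff {l : List ℕ} (hl : l.Pairwise (· ≥ ·)) (m i : ℕ) :
    i < conj l m ↔ i < l.length ∧ m ≤ l.getD i 0 := by
  rw [conj, countP_eq_countP_range]
  rw [lt_countP_range_iff]
  · simp
  · intro i j hij hj hq
    simp only [decide_eq_true_eq] at *
    exact le_trans hq (sorted_getD hl hij hj)

lemma lt_durfee_iff {l : List ℕ} (hl : l.Pairwise (· ≥ ·)) (i : ℕ) :
    i < durfee l ↔ i < l.length ∧ i + 1 ≤ l.getD i 0 := by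
  rw [durfee, lt_countP_range_iff]
  · simp
  · intro i j hij hj hq
    simp only [decide_eq_true_eq] at *
    calc i + 1 ≤ j + 1 := by omega
    _ ≤ l.getD j 0 := hq
    _ ≤ l.getD i 0 := sorted_getD hl hij hj

lemma conj_anti (l : List ℕ) {m m' : ℕ} (h : m ≤ m') : conj l m' ≤ conj l m := by
  apply List.countP_mono_left
  intro x _ hx
  simp only [decide_eq_true_eq] at *
  omega

lemma sorted_iff_getD {l : List ℕ} :
    l.Pairwise (· ≥ ·) ↔ ∀ i j, i ≤ j → j < l.length → l.getD j 0 ≤ l.getD i 0 := by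
  constructor
  · exact fun h _ _ => sorted_getD h
  · intro h
    apply List.pairwise_iff_get.2
    intro i j hij
    have := h i j (le_of_lt hij) j.isLt
    rwa [List.getD_eq_getElem l 0 j.isLt, List.getD_eq_getElem l 0 i.isLt] at this

lemma sum_filter_ne_zero (L : List ℕ) : (L.filter (fun x => x ≠ 0)).sum = L.sum := by
  induction L with
  | nil => simp
  | cons a L ih =>
    simp only [ne_eq, decide_not] at ih ⊢
    by_cases h : a = 0 <;> simp [h, List.filter_cons, ih]

lemma sum_map_sub (k : ℕ) : ∀ X : List ℕ, (∀ x ∈ X, k ≤ x) →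
    (X.map (fun x => x - k)).sum + k * X.length = X.sum
  | [] => by simp
  | a :: X => fun h => by
    simp only [List.map_cons, List.sum_cons, List.length_cons]
    have h1 := sum_map_sub k X (fun x hx => h x (List.mem_cons_of_mem a hx))
    have h2 : k ≤ a := h a List.mem_cons_self
    have h3 : k * (X.length + 1) = k * X.length + k := by ring
    omega

lemma mem_take_bound {δ : List ℕ} {n x : ℕ} (hx : x ∈ δ.take n) :
    ∃ i, i < n ∧ i < δ.length ∧ δ.getD i 0 = x := by
  obtain ⟨i, hi, rfl⟩ := List.mem_iff_getElem.1 hx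
  have hi' : i < n ∧ i < δ.length := by
    rw [List.length_take] at hi; omega
  exact ⟨i, hi'.1, hi'.2, by rw [List.getD_eq_getElem _ _ hi'.2]; exact List.getElem_take.symm⟩

lemma mem_drop_bound {δ : List ℕ} {n x : ℕ} (hx : x ∈ δ.drop n) :
    ∃ i, n ≤ i ∧ i < δ.length ∧ δ.getD i 0 = x := by
  obtain ⟨i, hi, rfl⟩ := List.mem_iff_getElem.1 hx
  have hi' : n + i < δ.length := by
    rw [List.length_drop] at hi; omega
  exact ⟨n + i, by omega, hi', by
    rw [List.getD_eq_getElem _ _ hi']; exact List.getElem_drop.symm⟩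

lemma getD_drop (δ : List ℕ) (n j : ℕ) : (δ.drop n).getD j 0 = δ.getD (n + j) 0 := by
  by_cases h : n + j < δ.length
  · have h2 : j < (δ.drop n).length := by rw [List.length_drop]; omega
    rw [List.getD_eq_getElem _ _ h2, List.getD_eq_getElem _ _ h, List.getElem_drop]
  · rw [List.getD_eq_default _ _ (by rw [List.length_drop]; omega),
      List.getD_eq_default _ _ (by omega)]

/-- Lemma 3.1 (first part): if `(λ,s,t)` satisfies `1 ≤ s ≤ D(λ)`, `1 ≤ t ≤ λ_1` and is
not a doubly marked partition (`t < s` or `λ'_s > λ'_t`), let `p` be the maximal integer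
with `λ'_p = λ'_s`, let `δ = (λ_1-p+s-1, …, λ_{λ'_s}-p+s-1, λ_{λ'_s+1}, …, λ_ℓ)`,
let `a` be the minimal integer with `δ_a < λ'_s` (since `δ` is weakly decreasing,
`a = #{i : δ_i ≥ λ'_s} + 1`), and let `μ = (δ_1, …, δ_{a-1}, λ'_s, …, λ'_p, δ_a, …, δ_ℓ)`
(zero parts removed). Then `μ` is a partition of `|λ|` and `1 ≤ a ≤ D(μ)`. -/
theorem tau_image (l : List ℕ) (s t : ℕ) (hl : IsPartitionList l)
    (hs1 : 1 ≤ s) (hsD : s ≤ durfee l) (ht1 : 1 ≤ t) (ht : t ≤ part l 1)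
    (hnd : t < s ∨ conj l t < conj l s) :
    ∀ p δ a μ,
      p = Nat.findGreatest (fun x => conj l x = conj l s) (part l 1) →
      δ = (l.take (conj l s)).map (fun x => x - (p + 1 - s)) ++ l.drop (conj l s) →
      a = δ.countP (fun x => conj l s ≤ x) + 1 →
      μ = (δ.take (a - 1) ++ (List.range (p + 1 - s)).map (fun i => conj l (s + i)) ++
            δ.drop (a - 1)).filter (fun x => x ≠ 0) →
      IsPartitionList μ ∧ μ.sum = l.sum ∧ 1 ≤ a ∧ a ≤ durfee μ := by
  obtain ⟨hsort, hpos⟩ := hl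
  intro p δ a μ hp hδ ha hμ
  clear hnd ht1 ht
  have hiff : ∀ m i, i < conj l m ↔ i < l.length ∧ m ≤ l.getD i 0 :=
    fun m i => lt_conj_iff hsort m i
  have hd : s - 1 < l.length ∧ s - 1 + 1 ≤ l.getD (s - 1) 0 :=
    (lt_durfee_iff hsort (s - 1)).1 (by omega)
  set L := l.length with hL
  set c := conj l s with hcdef
  have hcs : s ≤ c := by
    have := (hiff s (s - 1)).2 ⟨hd.1, by omega⟩
    omega
  have hcL : c ≤ L := List.countP_le_length
  have hpart1 : part l 1 = l.getD 0 0 := rfl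
  have hlam1 : s ≤ part l 1 := by
    have h0 : l.getD (s - 1) 0 ≤ l.getD 0 0 := sorted_getD hsort (Nat.zero_le _) hd.1
    omega
  have hps : s ≤ p := by rw [hp]; exact Nat.le_findGreatest (P := fun x => conj l x = c) hlam1 hcdef.symm
  have hpc : conj l p = c := by rw [hp]; exact Nat.findGreatest_spec (P := fun x => conj l x = c) hlam1 hcdef.symm
  have hp1 : conj l (p + 1) < c := by
    by_cases hc : p + 1 ≤ part l 1
    · have hne : ¬(conj l (p + 1) = c) := by
        rw [hp]
        exact Nat.findGreatest_is_greatest (P := fun x => conj l x = c)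
          (Nat.lt_succ_self _) (by rw [← hp]; exact hc)
      have hmono : conj l (p + 1) ≤ conj l p := conj_anti l (by omega)
      omega
    · have hz : conj l (p + 1) = 0 := by
        by_contra h
        have := (hiff (p + 1) 0).1 (Nat.pos_of_ne_zero h)
        omega
      omega
  have hge : c - 1 < L ∧ p ≤ l.getD (c - 1) 0 := (hiff p (c - 1)).1 (by omega)
  have hle : l.getD (c - 1) 0 ≤ p := by
    by_contra h
    have := (hiff (p + 1) (c - 1)).2 ⟨by omega, by omega⟩
    omega
  have hlast : l.getD (c - 1) 0 = p := le_antisymm hle hge.2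
  set k := p + 1 - s with hkdef
  have hk1 : 1 ≤ k := by omega
  have htake : ∀ i < c, p ≤ l.getD i 0 := fun i hi =>
    le_trans hge.2 (sorted_getD hsort (by omega) (by omega))
  have hafter : ∀ i, c ≤ i → l.getD i 0 < s := by
    intro i hi
    by_cases hiL : i < L
    · by_contra h
      have := (hiff s i).2 ⟨hiL, by omega⟩
      omega
    · rw [List.getD_eq_default _ _ (by omega)]
      omega
  -- δ facts
  have hδlen : δ.length = L := by
    rw [hδ, List.length_append, List.length_map, List.length_take, List.length_drop]
    omega
  have hδget1 : ∀ i < c, δ.getD i 0 = l.getD i 0 - k := by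
    intro i hi
    have hlen1 : i < ((l.take c).map (fun x => x - k)).length := by
      rw [List.length_map, List.length_take]; omega
    rw [hδ, List.getD_append _ _ _ _ hlen1, List.getD_eq_getElem _ _ hlen1,
      List.getElem_map, List.getElem_take, ← List.getD_eq_getElem _ 0 (by omega)]
  have hδget2 : ∀ i, c ≤ i → δ.getD i 0 = l.getD i 0 := by
    intro i hi
    have hlen1 : ((l.take c).map (fun x => x - k)).length = c := by
      rw [List.length_map, List.length_take]; omega
    rw [hδ, List.getD_append_right _ _ _ _ (by omega), hlen1, getD_drop]
    congr 1
    omega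
  have hδsorted : δ.Pairwise (· ≥ ·) := by
    rw [sorted_iff_getD]
    intro i j hij hj
    rw [hδlen] at hj
    by_cases hjc : j < c
    · rw [hδget1 i (by omega), hδget1 j hjc]
      have := sorted_getD hsort hij (by omega)
      omega
    · rw [hδget2 j (by omega)]
      by_cases hic : i < c
      · rw [hδget1 i hic]
        have h1 := htake i hic
        have h2 := hafter j (by omega)
        omega
      · rw [hδget2 i (by omega)]
        exact sorted_getD hsort hij (by omega)
  have hacount : a - 1 = δ.countP (fun x => c ≤ x) := by omega
  have hδkey : ∀ i, i < a - 1 ↔ (i < L ∧ c ≤ δ.getD i 0) := by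
    intro i
    rw [hacount, countP_eq_countP_range, hδlen, lt_countP_range_iff]
    · simp
    · intro i j hij hj hq
      simp only [decide_eq_true_eq] at *
      have := sorted_getD hδsorted hij (by omega)
      omega
  have haL : a - 1 ≤ L := by
    rw [hacount]
    exact le_trans (List.countP_le_length) (le_of_eq hδlen)
  have hac : a ≤ c := by
    by_contra h
    have h2 := (hδkey (c - 1)).1 (by omega)
    rw [hδget1 (c - 1) (by omega), hlast] at h2
    omega
  have hB : (List.range k).map (fun i => conj l (s + i)) = List.replicate k c := by
    apply List.eq_replicate_iff.2
    refine ⟨by simp, ?_⟩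
    intro b hb
    simp only [List.mem_map, List.mem_range] at hb
    obtain ⟨i, hi, rfl⟩ := hb
    have h1 : conj l p ≤ conj l (s + i) := conj_anti l (by omega)
    have h2 : conj l (s + i) ≤ conj l s := conj_anti l (by omega)
    omega
  rw [hB] at hμ
  have hAlen : (δ.take (a - 1)).length = a - 1 := by
    rw [List.length_take]; omega
  have hAmem : ∀ x ∈ δ.take (a - 1), c ≤ x := by
    intro x hx
    obtain ⟨i, hi1, hi2, rfl⟩ := mem_take_bound hx
    exact ((hδkey i).1 hi1).2
  have hCmem : ∀ x ∈ δ.drop (a - 1), x < c := by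
    intro x hx
    obtain ⟨i, hi1, hi2, rfl⟩ := mem_drop_bound hx
    rw [hδlen] at hi2
    have := (hδkey i).not.1 (by omega)
    omega
  have hBmem : ∀ x ∈ List.replicate k c, x = c := fun x hx =>
    (List.eq_of_mem_replicate hx)
  have hμ0sorted : (δ.take (a - 1) ++ List.replicate k c ++ δ.drop (a - 1)).Pairwise (· ≥ ·) := by
    rw [List.pairwise_append, List.pairwise_append]
    refine ⟨⟨List.Pairwise.sublist (List.take_sublist _ _) hδsorted,
      List.pairwise_replicate.2 (Or.inr (le_refl c)), ?_⟩,
      List.Pairwise.sublist (List.drop_sublist _ _) hδsorted, ?_⟩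
    · intro x hx y hy
      rw [hBmem y hy]
      exact hAmem x hx
    · intro x hx y hy
      rcases List.mem_append.1 hx with hx | hx
      · have := hAmem x hx
        have := hCmem y hy
        omega
      · rw [hBmem x hx]
        exact le_of_lt (hCmem y hy)
  have hμsorted : μ.Pairwise (· ≥ ·) := hμ ▸ hμ0sorted.filter _
  have hμpos : ∀ x ∈ μ, 0 < x := by
    intro x hx
    rw [hμ, List.mem_filter] at hx
    have := hx.2
    simp only [ne_eq, decide_not, Bool.not_eq_true', decide_eq_false_iff_not] at this
    omega
  have hsum : μ.sum = l.sum := by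
    rw [hμ, _root_.sum_filter_ne_zero, List.sum_append, List.sum_append]
    have h1 : (δ.take (a - 1)).sum + (δ.drop (a - 1)).sum = δ.sum := by
      rw [← List.sum_append, List.take_append_drop]
    have h2 : (List.replicate k c).sum = k * c := by
      rw [List.sum_replicate, smul_eq_mul]
    have h4 : ((l.take c).map (fun x => x - k)).sum + k * (l.take c).length = (l.take c).sum := by
      apply sum_map_sub
      intro x hx
      obtain ⟨i, hi1, hi2, rfl⟩ := mem_take_bound hx
      have := htake i hi1
      omega
    have h5 : (l.take c).length = c := by rw [List.length_take]; omega
    rw [h5] at h4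
    have h6 : (l.take c).sum + (l.drop c).sum = l.sum := by
      rw [← List.sum_append, List.take_append_drop]
    have h3 : δ.sum = ((l.take c).map (fun x => x - k)).sum + (l.drop c).sum := by
      rw [hδ, List.sum_append]
    omega
  -- durfee bound
  have hfA : (δ.take (a - 1)).filter (fun x => x ≠ 0) = δ.take (a - 1) := by
    apply List.filter_eq_self.2
    intro x hx
    have := hAmem x hx
    simp only [ne_eq, decide_not, Bool.not_eq_true', decide_eq_false_iff_not]
    omega
  have hfB : (List.replicate k c).filter (fun x => x ≠ 0) = List.replicate k c := by
    apply List.filter_eq_self.2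
    intro x hx
    have := hBmem x hx
    simp only [ne_eq, decide_not, Bool.not_eq_true', decide_eq_false_iff_not]
    omega
  have hμeq : μ = δ.take (a - 1) ++ (List.replicate k c ++
      (δ.drop (a - 1)).filter (fun x => x ≠ 0)) := by
    rw [hμ, List.filter_append, List.filter_append, hfA, hfB, List.append_assoc]
  have hμa : μ.getD (a - 1) 0 = c := by
    rw [hμeq, List.getD_append_right _ _ _ _ (by omega), hAlen, Nat.sub_self,
      List.getD_append _ _ _ _ (by rw [List.length_replicate]; omega),
      List.getD_eq_getElem _ _ (by rw [List.length_replicate]; omega),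
      List.getElem_replicate]
  have hμlen : a - 1 < μ.length := by
    rw [hμeq, List.length_append, List.length_append, hAlen, List.length_replicate]
    omega
  have hda : a - 1 < durfee μ := (lt_durfee_iff hμsorted (a - 1)).2 ⟨hμlen, by rw [hμa]; omega⟩
  exact ⟨⟨hμsorted, hμpos⟩, hsum, by omega, by omega⟩
end

section
/- The number of partitions (α, β) of n into a pair where β has all parts equal, counted with the constraints that m is in the rank-set of α and β_1 = j + m + 1 + h (j the width of the m-Durfee rectangle of α, h the maximum integer with α_{j+m+1+h} ≥ h), for fixed m ≥ 0, j, h with 0 ≤ h ≤ j, has generating function q^{(m+j)j} · q^j · q^{h²} · [j choose h]_q · 1/((q;q)_h (q;q)_{m+j}) · q^{h+j+m+1}/(1 − q^{m+1+j+h}). -/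
open Finset

/-- The rank-set of a partition `α`: `{j - α_{j+1} : j ≥ 0}` (as integers). -/
def rankSet (l : List ℕ) : Set ℤ := {x | ∃ j : ℕ, x = (j : ℤ) - part l (j + 1)}

/-- The width `j` of the `m`-Durfee rectangle of `α`: the largest `j` such that the
`(m+j) × j` rectangle is contained in the Ferrers diagram of `α`, i.e. (for `j ≥ 1`)
`m + j ≥ 1` and `α_{m+j} ≥ j`; it is `0` if no such `j ≥ 1` exists. -/
noncomputable def mDurfeeWidth (m : ℤ) (l : List ℕ) : ℕ :=
  Nat.findGreatest (fun j => 0 < m + j ∧ (j : ℤ) ≤ part l (m + j).toNat)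
    (l.headD 0 + l.length)

/-- Given `α` with `m`-Durfee rectangle of width `j`, the maximum integer `h` such that
`α_{j+m+1+h} ≥ h`. -/
noncomputable def hMax (m : ℤ) (l : List ℕ) (j : ℕ) : ℕ :=
  Nat.findGreatest (fun h => 0 < m + j + 1 + h ∧ (h : ℤ) ≤ part l (m + j + 1 + h).toNat)
    (l.headD 0 + l.length)

open PowerSeries

/-- `(q;q)_n = ∏_{i=1}^n (1 - q^i)` as a formal power series in `q = X`. -/
noncomputable def qpoch (n : ℕ) : PowerSeries ℚ :=
  ∏ i ∈ Finset.range n, (1 - (X : PowerSeries ℚ) ^ (i + 1))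

/-- The Gaussian binomial `[j choose h]_q = (q;q)_j / ((q;q)_h (q;q)_{j-h})`. -/
noncomputable def gauss (j h : ℕ) : PowerSeries ℚ :=
  qpoch j * (qpoch h)⁻¹ * (qpoch (j - h))⁻¹

namespace SPTAux

/-! ### basic indexed-part lemmas (0-indexed `pt`) -/

def pt (l : List ℕ) (i : ℕ) : ℕ := l.getD i 0

lemma part_eq_pt (l : List ℕ) (i : ℕ) : part l i = pt l (i-1) := rfl

lemma pt_eq_get (l : List ℕ) {i : ℕ} (h : i < l.length) : pt l i = l[i] :=
  List.getD_eq_getElem l 0 h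

lemma pt_eq_zero (l : List ℕ) {i : ℕ} (h : l.length ≤ i) : pt l i = 0 :=
  List.getD_eq_default l 0 h

lemma pt_anti {l : List ℕ} (hs : l.Pairwise (· ≥ ·)) {i j : ℕ} (hij : i ≤ j) :
    pt l j ≤ pt l i := by
  rcases lt_or_ge j l.length with hj | hj
  · have hi : i < l.length := lt_of_le_of_lt hij hj
    rw [pt_eq_get l hj, pt_eq_get l hi]
    rcases eq_or_lt_of_le hij with rfl | hlt
    · exact le_rfl
    · exact List.Pairwise.rel_get_of_lt hs (by exact_mod_cast hlt)
  · rw [pt_eq_zero l hj]; exact Nat.zero_le _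

lemma pt_pos {l : List ℕ} (hp : ∀ x ∈ l, 0 < x) {i : ℕ} (h : i < l.length) :
    0 < pt l i := by
  rw [pt_eq_get l h]; exact hp _ (List.getElem_mem h)

lemma lt_length_of_pt_pos {l : List ℕ} {i : ℕ} (h : 0 < pt l i) : i < l.length := by
  by_contra hc
  rw [pt_eq_zero l (le_of_not_gt hc)] at h; exact lt_irrefl 0 h

lemma pt_mem {l : List ℕ} {i : ℕ} (h : i < l.length) : pt l i ∈ l := by
  rw [pt_eq_get l h]; exact List.getElem_mem h

lemma pt_le_headD {l : List ℕ} (hs : l.Pairwise (· ≥ ·)) (i : ℕ) : pt l i ≤ l.headD 0 := by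
  rcases l with _ | ⟨a, t⟩
  · simp [pt]
  · exact pt_anti hs (Nat.zero_le i)

lemma pt_drop (l : List ℕ) (k i : ℕ) : pt (l.drop k) i = pt l (k + i) := by
  simp [pt, List.getD_eq_getElem?_getD, List.getElem?_drop]

lemma pt_append_left {l₁ l₂ : List ℕ} {i : ℕ} (h : i < l₁.length) :
    pt (l₁ ++ l₂) i = pt l₁ i := by
  rw [pt_eq_get _ (by simp; omega), pt_eq_get _ h]
  exact List.getElem_append_left h

lemma pt_append_right (l₁ l₂ : List ℕ) (i : ℕ) :
    pt (l₁ ++ l₂) (l₁.length + i) = pt l₂ i := by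
  simp [pt, List.getD_eq_getElem?_getD, List.getElem?_append_right]

lemma sorted_map_sub {l : List ℕ} (hs : l.Pairwise (· ≥ ·)) (c : ℕ) :
    (l.map (· - c)).Pairwise (· ≥ ·) := by
  rw [List.pairwise_map]
  exact hs.imp (fun h => Nat.sub_le_sub_right h c)

lemma sorted_map_add {l : List ℕ} (hs : l.Pairwise (· ≥ ·)) (c : ℕ) :
    (l.map (· + c)).Pairwise (· ≥ ·) := by
  rw [List.pairwise_map]
  exact hs.imp (fun h => Nat.add_le_add_right h c)

lemma sorted_filter {l : List ℕ} (hs : l.Pairwise (· ≥ ·)) (p : ℕ → Bool) :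
    (l.filter p).Pairwise (· ≥ ·) := List.Pairwise.filter p hs

lemma sum_filter_pos (l : List ℕ) : (l.filter (fun x => 0 < x)).sum = l.sum := by
  induction l with
  | nil => rfl
  | cons a t ih =>
    rcases Nat.eq_zero_or_pos a with rfl | ha
    · simpa using ih
    · simp [List.filter_cons, ha, ih]

/-! ### strip and pad -/

def strip (c : ℕ) (l : List ℕ) : List ℕ := (l.map (· - c)).filter (fun x => 0 < x)

def pad (c k : ℕ) (l : List ℕ) : List ℕ := l.map (· + c) ++ List.replicate k c

lemma strip_sorted {l : List ℕ} (hs : l.Pairwise (· ≥ ·)) (c : ℕ) :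
    (strip c l).Pairwise (· ≥ ·) := sorted_filter (sorted_map_sub hs c) _

lemma strip_pos (c : ℕ) (l : List ℕ) : ∀ x ∈ strip c l, 0 < x := by
  intro x hx
  have := List.of_mem_filter hx
  simpa using this

lemma length_strip_le (c : ℕ) (l : List ℕ) : (strip c l).length ≤ l.length :=
  le_trans (List.length_filter_le _ _) (by simp)

lemma strip_pad (c k : ℕ) {l : List ℕ} (hp : ∀ x ∈ l, 0 < x) : strip c (pad c k l) = l := by
  unfold strip pad
  rw [List.map_append, List.filter_append, List.map_map]
  have h1 : (l.map ((· - c) ∘ (· + c))) = l := by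
    rw [List.map_congr_left (g := id) (fun x _ => by simp), List.map_id]
  have h2 : (List.replicate k c).map (· - c) = List.replicate k 0 := by
    simp [List.map_replicate]
  rw [h1, h2]
  rw [List.filter_eq_self.2 (fun x hx => by simpa using hp x hx)]
  simp [List.filter_replicate]

lemma pad_strip {l : List ℕ} (hs : l.Pairwise (· ≥ ·)) {c : ℕ} (hc : ∀ x ∈ l, c ≤ x) :
    pad c (l.length - (strip c l).length) (strip c l) = l := by
  induction l with
  | nil => rfl
  | cons a t ih =>
    have hac : c ≤ a := hc a (List.mem_cons_self)
    rcases eq_or_lt_of_le hac with heq | hlt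
    · -- all of a :: t equals c
      subst heq
      have hall : ∀ x ∈ c :: t, x = c := by
        intro x hx
        rcases List.mem_cons.mp hx with rfl | hx
        · rfl
        · exact le_antisymm (List.rel_of_pairwise_cons hs hx) (hc x (List.mem_cons_of_mem c hx))
      have hstrip : strip c (c :: t) = [] := by
        unfold strip
        rw [List.filter_eq_nil_iff]
        intro x hx
        rcases List.mem_map.mp hx with ⟨y, hy, rfl⟩
        have := hall y hy
        simp [this]
      rw [hstrip]
      unfold pad
      simp only [List.map_nil, List.nil_append, List.length_nil, Nat.sub_zero]
      exact (List.eq_replicate_iff.mpr ⟨by simp, hall⟩).symm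
    · -- a > c
      have hstrip : strip c (a :: t) = (a - c) :: strip c t := by
        unfold strip
        simp only [List.map_cons, List.filter_cons]
        have : 0 < a - c := by omega
        simp [this]
      rw [hstrip]
      unfold pad
      simp only [List.map_cons, List.cons_append, List.length_cons]
      have ht := ih (hs.of_cons) (fun x hx => hc x (List.mem_cons_of_mem a hx))
      have hlen : (strip c t).length ≤ t.length := length_strip_le c t
      have : t.length + 1 - ((strip c t).length + 1) = t.length - (strip c t).length := by omega
      rw [this]
      unfold pad at ht
      rw [ht]
      congr 1
      omega

lemma sum_map_sub {c : ℕ} : ∀ {l : List ℕ}, (∀ x ∈ l, c ≤ x) →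
    (l.map (· - c)).sum + c * l.length = l.sum := by
  intro l
  induction l with
  | nil => simp
  | cons a t ih =>
    intro hc
    have h1 := ih (fun x hx => hc x (List.mem_cons_of_mem a hx))
    have hac : c ≤ a := hc a (List.mem_cons_self)
    simp only [List.map_cons, List.sum_cons, List.length_cons]
    have : c * (t.length + 1) = c * t.length + c := by ring
    omega

lemma sum_strip {l : List ℕ} {c : ℕ} (hc : ∀ x ∈ l, c ≤ x) :
    (strip c l).sum + c * l.length = l.sum := by
  unfold strip
  rw [sum_filter_pos]
  exact sum_map_sub hc

lemma sum_pad (c k : ℕ) (l : List ℕ) : (pad c k l).sum = l.sum + c * (l.length + k) := by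
  unfold pad
  rw [List.sum_append, List.sum_replicate]
  have : (l.map (· + c)).sum = l.sum + c * l.length := by
    induction l with
    | nil => simp
    | cons a t ih => simp [ih]; ring
  rw [this]
  simp [smul_eq_mul]
  ring

lemma pad_length (c k : ℕ) (l : List ℕ) : (pad c k l).length = l.length + k := by
  simp [pad]

lemma pad_sorted {l : List ℕ} (hs : l.Pairwise (· ≥ ·)) (c k : ℕ) :
    (pad c k l).Pairwise (· ≥ ·) := by
  unfold pad
  rw [List.pairwise_append]
  refine ⟨sorted_map_add hs c, List.pairwise_replicate.mpr (Or.inr le_rfl), ?_⟩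
  intro x hx y hy
  rcases List.mem_map.mp hx with ⟨z, _, rfl⟩
  have := List.eq_of_mem_replicate hy
  omega

lemma pad_pos {l : List ℕ} (c : ℕ) {k : ℕ} (hkc : 0 < k → 0 < c) (hp : ∀ x ∈ l, 0 < x) :
    ∀ x ∈ pad c k l, 0 < x := by
  intro x hx
  rcases List.mem_append.mp hx with hx | hx
  · rcases List.mem_map.mp hx with ⟨z, hz, rfl⟩
    have := hp z hz; omega
  · have := List.eq_of_mem_replicate hx
    subst this
    rcases Nat.eq_zero_or_pos k with rfl | hk
    · simp at hx
    · exact hkc hk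

lemma pad_mem_le {l : List ℕ} {c b k : ℕ} (hcb : c ≤ b) (hl : ∀ x ∈ l, x + c ≤ b) :
    ∀ x ∈ pad c k l, x ≤ b := by
  intro x hx
  rcases List.mem_append.mp hx with hx | hx
  · rcases List.mem_map.mp hx with ⟨z, hz, rfl⟩; exact hl z hz
  · have := List.eq_of_mem_replicate hx; omega



open PowerSeries

lemma list_eq_of_multiset_eq {l l' : List ℕ} (hs : l.Pairwise (· ≥ ·)) (hs' : l'.Pairwise (· ≥ ·))
    (h : (l : Multiset ℕ) = (l' : Multiset ℕ)) : l = l' :=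
  List.Perm.eq_of_pairwise (fun a b _ _ h1 h2 => le_antisymm h2 h1) hs hs' (Multiset.coe_eq_coe.mp h)

/-- partitions-as-lists of `n` are in bijection with `Nat.Partition n`. -/
def plistEquiv (n : ℕ) : {l : List ℕ // IsPartitionList l ∧ l.sum = n} ≃ Nat.Partition n where
  toFun l := ⟨(l.1 : Multiset ℕ), fun {i} hi => l.2.1.2 i hi, by
    rw [Multiset.sum_coe]; exact l.2.2⟩
  invFun p := ⟨p.parts.sort (· ≥ ·), ⟨Multiset.pairwise_sort _ _, fun x hx =>
      p.parts_pos ((Multiset.mem_sort _).mp hx)⟩, by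
    rw [← Multiset.sum_coe, Multiset.sort_eq]; exact p.parts_sum⟩
  left_inv l := by
    apply Subtype.ext
    dsimp only
    exact list_eq_of_multiset_eq (Multiset.pairwise_sort _ _) l.2.1.1 (Multiset.sort_eq _ _)
  right_inv p := by
    apply Nat.Partition.ext
    exact Multiset.sort_eq _ _

lemma finite_plist (n : ℕ) : Finite {l : List ℕ // IsPartitionList l ∧ l.sum = n} :=
  Finite.of_equiv _ (plistEquiv n).symm

def boundedEquiv (n : ℕ) : {l : List ℕ // IsPartitionList l ∧ l.sum ≤ n} ≃
    Σ k : Fin (n+1), {l : List ℕ // IsPartitionList l ∧ l.sum = k} where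
  toFun l := ⟨⟨l.1.sum, Nat.lt_succ_of_le l.2.2⟩, ⟨l.1, l.2.1, rfl⟩⟩
  invFun x := ⟨x.2.1, x.2.2.1, by have := x.2.2.2; have := x.1.2; omega⟩
  left_inv l := rfl
  right_inv x := by
    obtain ⟨⟨k, hk⟩, ⟨l, hl, hsum⟩⟩ := x
    simp only at hsum
    subst hsum
    rfl

lemma finite_bounded (n : ℕ) : Finite {l : List ℕ // IsPartitionList l ∧ l.sum ≤ n} := by
  haveI : ∀ k : Fin (n+1), Finite {l : List ℕ // IsPartitionList l ∧ l.sum = (k:ℕ)} :=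
    fun k => finite_plist k
  exact Finite.of_equiv _ (boundedEquiv n).symm

lemma finite_sub {P : List ℕ → Prop} (hP : ∀ l, P l → IsPartitionList l) (n : ℕ) :
    Finite {l : List ℕ // P l ∧ l.sum = n} := by
  have := finite_bounded n
  exact Finite.of_injective
    (fun x => (⟨x.1, hP x.1 x.2.1, le_of_eq x.2.2⟩ :
      {l : List ℕ // IsPartitionList l ∧ l.sum ≤ n}))
    (by intro a b h; have h2 := congrArg Subtype.val h; exact Subtype.ext h2)

/-! ### generating functions of weighted counts -/

noncomputable def gfc {σ : Type} (P : σ → Prop) (f : σ → ℕ) : PowerSeries ℚ :=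
  PowerSeries.mk fun n => (Nat.card {x : σ // P x ∧ f x = n} : ℚ)

lemma coeff_gfc {σ : Type} (P : σ → Prop) (f : σ → ℕ) (n : ℕ) :
    (coeff n) (gfc P f) = (Nat.card {x : σ // P x ∧ f x = n} : ℚ) := coeff_mk n _

lemma gfc_congr {σ : Type} {P Q : σ → Prop} {f : σ → ℕ} (h : ∀ x, P x ↔ Q x) :
    gfc P f = gfc Q f := by
  ext n
  rw [coeff_gfc, coeff_gfc]
  congr 1
  exact Nat.card_congr (Equiv.subtypeEquivRight fun x => and_congr_left fun _ => h x)

lemma nat_card_sigma {ι : Type} [Fintype ι] (g : ι → Type) [∀ i, Finite (g i)] :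
    Nat.card (Σ i, g i) = ∑ i, Nat.card (g i) := by
  classical
  letI : ∀ i, Fintype (g i) := fun i => Fintype.ofFinite _
  simp [Nat.card_eq_fintype_card]

def prodEquiv {σ τ : Type} (P : σ → Prop) (Q : τ → Prop) (f : σ → ℕ) (g : τ → ℕ) (n : ℕ) :
    {z : σ × τ // (P z.1 ∧ Q z.2) ∧ f z.1 + g z.2 = n} ≃
      Σ p : (antidiagonal n : Finset (ℕ × ℕ)),
        ({x : σ // P x ∧ f x = p.1.1} × {y : τ // Q y ∧ g y = p.1.2}) where
  toFun z := ⟨⟨(f z.1.1, g z.1.2), by rw [Finset.HasAntidiagonal.mem_antidiagonal]; exact z.2.2⟩,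
    (⟨z.1.1, z.2.1.1, rfl⟩, ⟨z.1.2, z.2.1.2, rfl⟩)⟩
  invFun w := ⟨(w.2.1.1, w.2.2.1), ⟨w.2.1.2.1, w.2.2.2.1⟩, by
    have hw := w.1.2; rw [Finset.HasAntidiagonal.mem_antidiagonal] at hw
    rw [w.2.1.2.2, w.2.2.2.2]; exact hw⟩
  left_inv z := rfl
  right_inv w := by
    obtain ⟨⟨⟨a, b⟩, hab⟩, ⟨⟨x, hx1, hx2⟩, ⟨y, hy1, hy2⟩⟩⟩ := w
    simp only at hx2 hy2
    subst hx2; subst hy2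
    rfl

lemma gfc_mul {σ τ : Type} (P : σ → Prop) (Q : τ → Prop) (f : σ → ℕ) (g : τ → ℕ)
    (hP : ∀ n, Finite {x : σ // P x ∧ f x = n}) (hQ : ∀ n, Finite {y : τ // Q y ∧ g y = n}) :
    gfc P f * gfc Q g = gfc (fun z : σ × τ => P z.1 ∧ Q z.2) (fun z => f z.1 + g z.2) := by
  ext n
  rw [coeff_mul, coeff_gfc]
  rw [Nat.card_congr (prodEquiv P Q f g n)]
  haveI : ∀ p : (antidiagonal n : Finset (ℕ × ℕ)),
      Finite ({x : σ // P x ∧ f x = p.1.1} × {y : τ // Q y ∧ g y = p.1.2}) := by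
    intro p
    haveI := hP p.1.1; haveI := hQ p.1.2
    infer_instance
  rw [nat_card_sigma]
  push_cast
  rw [← Finset.sum_attach (antidiagonal n) (fun p => (coeff p.1) (gfc P f) * (coeff p.2) (gfc Q g))]
  apply Finset.sum_congr rfl
  intro p _
  rw [Nat.card_prod, coeff_gfc, coeff_gfc]
  push_cast
  ring

/-- shift lemma: adding a constant `K` to the weight multiplies the gf by `X^K`. -/
lemma gfc_shift {σ : Type} (P : σ → Prop) (f : σ → ℕ) (K : ℕ) :
    gfc P (fun x => f x + K) = X ^ K * gfc P f := by
  ext n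
  rw [coeff_gfc, coeff_X_pow_mul']
  by_cases hK : K ≤ n
  · rw [if_pos hK, coeff_gfc]
    congr 1
    apply Nat.card_congr
    apply Equiv.subtypeEquivRight
    intro x
    constructor
    · rintro ⟨h1, h2⟩; exact ⟨h1, by omega⟩
    · rintro ⟨h1, h2⟩; exact ⟨h1, by omega⟩
  · rw [if_neg hK]
    have : IsEmpty {x : σ // P x ∧ f x + K = n} := by
      constructor; rintro ⟨x, _, h⟩; omega
    rw [Nat.card_of_isEmpty]; simp

/-- splitting a count by an auxiliary predicate. -/
lemma gfc_split {σ : Type} (P : σ → Prop) (Q : σ → Prop) (f : σ → ℕ)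
    (h : ∀ n, Finite {x : σ // P x ∧ f x = n}) :
    gfc P f = gfc (fun x => P x ∧ Q x) f + gfc (fun x => P x ∧ ¬ Q x) f := by
  classical
  ext n
  rw [map_add, coeff_gfc, coeff_gfc, coeff_gfc]
  haveI := h n
  have e : {x : σ // P x ∧ f x = n} ≃
      {x : σ // (P x ∧ Q x) ∧ f x = n} ⊕ {x : σ // (P x ∧ ¬ Q x) ∧ f x = n} :=
    (Equiv.sumCompl (p := fun x : {x : σ // P x ∧ f x = n} => Q x.1)).symm.trans
      (Equiv.sumCongr
        ((Equiv.subtypeSubtypeEquivSubtypeInter (fun x => P x ∧ f x = n) (fun x => Q x)).trans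
          (Equiv.subtypeEquivRight (fun x => by tauto)))
        ((Equiv.subtypeSubtypeEquivSubtypeInter (fun x => P x ∧ f x = n) (fun x => ¬ Q x)).trans
          (Equiv.subtypeEquivRight (fun x => by tauto))))
  rw [Nat.card_congr e]
  haveI : Finite {x : σ // (P x ∧ Q x) ∧ f x = n} :=
    Finite.of_injective (fun a => (⟨a.1, a.2.1.1, a.2.2⟩ : {x : σ // P x ∧ f x = n}))
      (by intro a b hab; have h2 := congrArg Subtype.val hab; exact Subtype.ext h2)
  haveI : Finite {x : σ // (P x ∧ ¬ Q x) ∧ f x = n} :=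
    Finite.of_injective (fun a => (⟨a.1, a.2.1.1, a.2.2⟩ : {x : σ // P x ∧ f x = n}))
      (by intro a b hab; have h2 := congrArg Subtype.val hab; exact Subtype.ext h2)
  rw [Nat.card_sum]
  push_cast
  ring




lemma qpoch_succ (n : ℕ) : qpoch (n+1) = qpoch n * (1 - X ^ (n+1)) := Finset.prod_range_succ _ n

lemma constantCoeff_one_sub_pow (i : ℕ) :
    constantCoeff (1 - (X : PowerSeries ℚ) ^ (i+1)) = 1 := by
  rw [map_sub, map_one, map_pow, constantCoeff_X]
  simp

lemma constantCoeff_qpoch (n : ℕ) : constantCoeff (qpoch n) = 1 := by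
  unfold qpoch
  rw [map_prod]
  rw [Finset.prod_congr rfl (fun i _ => constantCoeff_one_sub_pow i)]
  simp

lemma qpoch_ne_zero (n : ℕ) : qpoch n ≠ 0 := by
  intro h
  have := constantCoeff_qpoch n
  rw [h, map_zero] at this
  exact one_ne_zero this.symm

lemma one_sub_pow_ne_zero (c : ℕ) (hc : 0 < c) : (1 - (X : PowerSeries ℚ) ^ c) ≠ 0 := by
  intro h
  have : constantCoeff (1 - (X : PowerSeries ℚ) ^ c) = 1 := by
    obtain ⟨i, rfl⟩ := Nat.exists_eq_add_of_lt hc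
    simpa using constantCoeff_one_sub_pow i
  rw [h, map_zero] at this
  exact one_ne_zero this.symm

/-! ### head-is-max lemma -/

lemma mem_le_headD {l : List ℕ} (hs : l.Pairwise (· ≥ ·)) {x : ℕ} (hx : x ∈ l) :
    x ≤ l.headD 0 := by
  rcases l with _ | ⟨a, t⟩
  · simp at hx
  · rcases List.mem_cons.mp hx with rfl | hx
    · simp
    · exact List.rel_of_pairwise_cons hs hx

/-! ### the three families -/

def PP (b : ℕ) (l : List ℕ) : Prop := IsPartitionList l ∧ ∀ x ∈ l, x ≤ b
def LL (a : ℕ) (l : List ℕ) : Prop := IsPartitionList l ∧ l.length ≤ a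
def NN (a b : ℕ) (l : List ℕ) : Prop := IsPartitionList l ∧ l.length ≤ a ∧ ∀ x ∈ l, x ≤ b
def BB (c : ℕ) (l : List ℕ) : Prop := IsPartitionList l ∧ l ≠ [] ∧ ∀ x ∈ l, x = c

noncomputable def Pser (b : ℕ) : PowerSeries ℚ := gfc (PP b) List.sum
noncomputable def Lser (a : ℕ) : PowerSeries ℚ := gfc (LL a) List.sum
noncomputable def Nser (a b : ℕ) : PowerSeries ℚ := gfc (NN a b) List.sum

lemma PP_mk {b : ℕ} {l : List ℕ} (h1 : IsPartitionList l) (h2 : ∀ x ∈ l, x ≤ b) : PP b l := by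
  exact ⟨h1, h2⟩
lemma LL_mk {a : ℕ} {l : List ℕ} (h1 : IsPartitionList l) (h2 : l.length ≤ a) : LL a l := by
  exact ⟨h1, h2⟩
lemma NN_mk {a b : ℕ} {l : List ℕ} (h1 : IsPartitionList l) (h2 : l.length ≤ a)
    (h3 : ∀ x ∈ l, x ≤ b) : NN a b l := by exact ⟨h1, h2, h3⟩
lemma isPartitionList_mk' {l : List ℕ} (h1 : l.Pairwise (· ≥ ·)) (h2 : ∀ x ∈ l, 0 < x) :
    IsPartitionList l := by exact ⟨h1, h2⟩

lemma finPP (b : ℕ) : ∀ n, Finite {l : List ℕ // PP b l ∧ l.sum = n} :=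
  fun n => finite_sub (fun _ h => h.1) n
lemma finLL (a : ℕ) : ∀ n, Finite {l : List ℕ // LL a l ∧ l.sum = n} :=
  fun n => finite_sub (fun _ h => h.1) n
lemma finNN (a b : ℕ) : ∀ n, Finite {l : List ℕ // NN a b l ∧ l.sum = n} :=
  fun n => finite_sub (fun _ h => h.1) n

/-- the trivial singleton series. -/
lemma gfc_of_unique_empty {P : List ℕ → Prop} (hP : ∀ l, P l ↔ l = []) :
    gfc P List.sum = 1 := by
  ext n
  rw [coeff_gfc]
  rcases Nat.eq_zero_or_pos n with rfl | hn
  · haveI : Unique {l : List ℕ // P l ∧ l.sum = 0} :=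
      { default := ⟨[], (hP []).mpr rfl, rfl⟩
        uniq := by rintro ⟨l, hl, _⟩; exact Subtype.ext ((hP l).mp hl) }
    rw [Nat.card_unique]
    simp
  · haveI : IsEmpty {l : List ℕ // P l ∧ l.sum = n} := by
      constructor
      rintro ⟨l, hl, hsum⟩
      rw [(hP l).mp hl] at hsum
      simp at hsum
      omega
    rw [Nat.card_of_isEmpty, coeff_one, if_neg (by omega)]
    simp

lemma Pser_zero : Pser 0 = 1 := by
  apply gfc_of_unique_empty
  intro l
  constructor
  · rintro ⟨⟨_, hpos⟩, hle⟩
    rcases l with _ | ⟨a, t⟩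
    · rfl
    · have h1 := hpos a (List.mem_cons_self)
      have h2 := hle a (List.mem_cons_self)
      omega
  · rintro rfl
    exact ⟨⟨List.Pairwise.nil, by simp⟩, by simp⟩

lemma Lser_zero : Lser 0 = 1 := by
  apply gfc_of_unique_empty
  intro l
  constructor
  · rintro ⟨_, hlen⟩
    exact List.length_eq_zero_iff.mp (Nat.le_zero.mp hlen)
  · rintro rfl
    exact ⟨⟨List.Pairwise.nil, by simp⟩, by simp⟩

lemma Nser_zero_left (b : ℕ) : Nser 0 b = 1 := by
  apply gfc_of_unique_empty
  intro l
  constructor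
  · rintro ⟨_, hlen, _⟩
    exact List.length_eq_zero_iff.mp (Nat.le_zero.mp hlen)
  · rintro rfl
    exact ⟨⟨List.Pairwise.nil, by simp⟩, by simp, by simp⟩

lemma Nser_zero_right (a : ℕ) : Nser a 0 = 1 := by
  apply gfc_of_unique_empty
  intro l
  constructor
  · rintro ⟨⟨_, hpos⟩, _, hle⟩
    rcases l with _ | ⟨x, t⟩
    · rfl
    · have h1 := hpos x (List.mem_cons_self)
      have h2 := hle x (List.mem_cons_self)
      omega
  · rintro rfl
    exact ⟨⟨List.Pairwise.nil, by simp⟩, by simp, by simp⟩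

lemma isPartitionList_mk {l : List ℕ} (h1 : l.Pairwise (· ≥ ·)) (h2 : ∀ x ∈ l, 0 < x) :
    IsPartitionList l := by exact ⟨h1, h2⟩

/-! ### tail/cons helpers -/

lemma sorted_tail {l : List ℕ} (hs : l.Pairwise (· ≥ ·)) : l.tail.Pairwise (· ≥ ·) := by
  rcases l with _ | ⟨a, t⟩
  · exact List.Pairwise.nil
  · exact hs.of_cons

lemma sum_eq_headD_add_tail (l : List ℕ) : l.sum = l.headD 0 + l.tail.sum := by
  cases l <;> simp

lemma headD_cons_tail {l : List ℕ} (h : l ≠ []) : l.headD 0 :: l.tail = l := by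
  cases l
  · simp at h
  · rfl

lemma ne_nil_of_headD_pos {l : List ℕ} (h : 0 < l.headD 0) : l ≠ [] := by
  cases l
  · simp at h
  · simp

/-! ### Pser recurrence -/

def ppConsEquiv (b n : ℕ) :
    {l : List ℕ // (PP (b+1) l ∧ l.headD 0 = b+1) ∧ l.sum = n} ≃
    {t : List ℕ // PP (b+1) t ∧ t.sum + (b+1) = n} where
  toFun l := ⟨l.1.tail, by
    obtain ⟨⟨⟨⟨hs, hp⟩, hb⟩, hh⟩, hsum⟩ := l.2
    refine ⟨⟨⟨sorted_tail hs, fun x hx => hp x (List.mem_of_mem_tail hx)⟩,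
      fun x hx => hb x (List.mem_of_mem_tail hx)⟩, ?_⟩
    have := sum_eq_headD_add_tail l.1
    omega⟩
  invFun t := ⟨(b+1) :: t.1, by
    obtain ⟨⟨⟨hs, hp⟩, hb⟩, hsum⟩ := t.2
    refine ⟨⟨⟨⟨List.pairwise_cons.mpr ⟨fun x hx => hb x hx, hs⟩,
      fun x hx => ?_⟩, fun x hx => ?_⟩, by simp⟩, by simp; omega⟩
    · rcases List.mem_cons.mp hx with rfl | hx
      · omega
      · exact hp x hx
    · rcases List.mem_cons.mp hx with rfl | hx
      · omega
      · exact hb x hx⟩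
  left_inv l := by
    apply Subtype.ext
    dsimp only
    have hh := l.2.1.2
    have hct := headD_cons_tail (l := l.1) (ne_nil_of_headD_pos (by omega))
    rw [hh] at hct
    exact hct
  right_inv t := by
    apply Subtype.ext
    rfl

lemma Pser_rec (b : ℕ) : Pser (b+1) * (1 - X^(b+1)) = Pser b := by
  have h1 := gfc_split (PP (b+1)) (fun l => l.headD 0 = b+1) List.sum (finPP (b+1))
  have h2 : gfc (fun l => PP (b+1) l ∧ ¬ (l.headD 0 = b+1)) List.sum = Pser b := by
    apply gfc_congr
    intro l
    constructor
    · rintro ⟨⟨hpl, hb⟩, hh⟩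
      refine ⟨hpl, fun x hx => ?_⟩
      have h3 := mem_le_headD hpl.1 hx
      have h4 : l.headD 0 ≤ b + 1 := by
        rcases l with _ | ⟨a, t⟩
        · simp
        · exact hb a (List.mem_cons_self)
      omega
    · rintro ⟨hpl, hb⟩
      refine ⟨⟨hpl, fun x hx => le_trans (hb x hx) (by omega)⟩, fun hh => ?_⟩
      have h4 : l.headD 0 ≤ b := by
        rcases l with _ | ⟨a, t⟩
        · simp
        · exact hb a (List.mem_cons_self)
      omega
  have h3 : gfc (fun l => PP (b+1) l ∧ l.headD 0 = b+1) List.sum = X^(b+1) * Pser (b+1) := by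
    rw [show (X:PowerSeries ℚ)^(b+1) * Pser (b+1) = X^(b+1) * gfc (PP (b+1)) List.sum from rfl,
      ← gfc_shift]
    ext n
    rw [coeff_gfc, coeff_gfc]
    congr 1
    exact Nat.card_congr (ppConsEquiv b n)
  have h1' : Pser (b+1) = gfc (fun l => PP (b+1) l ∧ l.headD 0 = b+1) List.sum
      + gfc (fun l => PP (b+1) l ∧ ¬ (l.headD 0 = b+1)) List.sum := h1
  rw [h2, h3] at h1'
  linear_combination h1' 

/-! ### Lser recurrence -/

noncomputable def llEquiv (a n : ℕ) :
    {l : List ℕ // (LL (a+1) l ∧ l.length = a+1) ∧ l.sum = n} ≃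
    {t : List ℕ // LL (a+1) t ∧ t.sum + (a+1) = n} where
  toFun l := ⟨strip 1 l.1, by
    obtain ⟨⟨⟨⟨hs, hp⟩, hlen⟩, hq⟩, hsum⟩ := l.2
    refine ⟨⟨⟨strip_sorted hs 1, strip_pos 1 l.1⟩,
      le_trans (length_strip_le 1 l.1) (by omega)⟩, ?_⟩
    have := sum_strip (l := l.1) (c := 1) (fun x hx => hp x hx)
    omega⟩
  invFun t := ⟨pad 1 (a + 1 - t.1.length) t.1, by
    obtain ⟨⟨⟨hs, hp⟩, hlen⟩, hsum⟩ := t.2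
    have hps : List.Pairwise (· ≥ ·) (pad 1 (a + 1 - t.1.length) t.1) := pad_sorted hs 1 _
    have hpp : ∀ x ∈ pad 1 (a + 1 - t.1.length) t.1, 0 < x :=
      pad_pos 1 (fun _ => Nat.one_pos) hp
    have hpl : (pad 1 (a + 1 - t.1.length) t.1).length ≤ a + 1 := by rw [pad_length]; omega
    refine ⟨⟨LL_mk (isPartitionList_mk hps hpp) hpl, by rw [pad_length]; omega⟩, ?_⟩
    rw [sum_pad]
    have h5 : t.1.length + (a + 1 - t.1.length) = a + 1 := by omega
    rw [h5]
    omega⟩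
  left_inv l := by
    apply Subtype.ext
    dsimp only
    obtain ⟨⟨⟨⟨hs, hp⟩, hlen⟩, hq⟩, hsum⟩ := l.2
    have h1 := pad_strip hs (c := 1) (fun x hx => hp x hx)
    rw [hq] at h1
    exact h1
  right_inv t := by
    apply Subtype.ext
    dsimp only
    exact strip_pad 1 _ t.2.1.1.2

lemma Lser_rec (a : ℕ) : Lser (a+1) * (1 - X^(a+1)) = Lser a := by
  have h1 := gfc_split (LL (a+1)) (fun l => l.length = a+1) List.sum (finLL (a+1))
  have h2 : gfc (fun l => LL (a+1) l ∧ ¬ (l.length = a+1)) List.sum = Lser a := by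
    apply gfc_congr
    intro l
    constructor
    · rintro ⟨⟨hpl, hlen⟩, hq⟩
      exact ⟨hpl, by omega⟩
    · rintro ⟨hpl, hlen⟩
      exact ⟨⟨hpl, by omega⟩, by omega⟩
  have h3 : gfc (fun l => LL (a+1) l ∧ l.length = a+1) List.sum = X^(a+1) * Lser (a+1) := by
    rw [show (X:PowerSeries ℚ)^(a+1) * Lser (a+1) = X^(a+1) * gfc (LL (a+1)) List.sum from rfl,
      ← gfc_shift]
    ext n
    rw [coeff_gfc, coeff_gfc]
    congr 1
    exact Nat.card_congr (llEquiv a n)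
  have h1' : Lser (a+1) = gfc (fun l => LL (a+1) l ∧ l.length = a+1) List.sum
      + gfc (fun l => LL (a+1) l ∧ ¬ (l.length = a+1)) List.sum := h1
  rw [h2, h3] at h1'
  linear_combination h1' 

/-! ### Nser recurrence -/

def nnConsEquiv (a b n : ℕ) :
    {l : List ℕ // (NN (a+1) (b+1) l ∧ l.headD 0 = b+1) ∧ l.sum = n} ≃
    {t : List ℕ // NN a (b+1) t ∧ t.sum + (b+1) = n} where
  toFun l := ⟨l.1.tail, by
    obtain ⟨⟨⟨⟨hs, hp⟩, hlen, hb⟩, hh⟩, hsum⟩ := l.2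
    have hne : l.1 ≠ [] := ne_nil_of_headD_pos (by omega)
    refine ⟨⟨⟨sorted_tail hs, fun x hx => hp x (List.mem_of_mem_tail hx)⟩,
      ?_, fun x hx => hb x (List.mem_of_mem_tail hx)⟩, ?_⟩
    · have : 0 < l.1.length := List.length_pos_iff.mpr hne
      rw [List.length_tail]
      omega
    · have := sum_eq_headD_add_tail l.1
      omega⟩
  invFun t := ⟨(b+1) :: t.1, by
    obtain ⟨⟨⟨hs, hp⟩, hlen, hb⟩, hsum⟩ := t.2
    refine ⟨⟨⟨⟨List.pairwise_cons.mpr ⟨fun x hx => hb x hx, hs⟩, fun x hx => ?_⟩,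
      by simp; omega, fun x hx => ?_⟩, by simp⟩, by simp; omega⟩
    · rcases List.mem_cons.mp hx with rfl | hx
      · omega
      · exact hp x hx
    · rcases List.mem_cons.mp hx with rfl | hx
      · omega
      · exact hb x hx⟩
  left_inv l := by
    apply Subtype.ext
    dsimp only
    have hh := l.2.1.2
    have hct := headD_cons_tail (l := l.1) (ne_nil_of_headD_pos (by omega))
    rw [hh] at hct
    exact hct
  right_inv t := by
    apply Subtype.ext
    rfl

lemma Nser_split (a b : ℕ) :
    Nser (a+1) (b+1) = Nser (a+1) b + X^(b+1) * Nser a (b+1) := by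
  have h1 := gfc_split (NN (a+1) (b+1)) (fun l => l.headD 0 = b+1) List.sum (finNN (a+1) (b+1))
  have h2 : gfc (fun l => NN (a+1) (b+1) l ∧ ¬ (l.headD 0 = b+1)) List.sum = Nser (a+1) b := by
    apply gfc_congr
    intro l
    constructor
    · rintro ⟨⟨hpl, hlen, hb⟩, hh⟩
      refine ⟨hpl, hlen, fun x hx => ?_⟩
      have h3 := mem_le_headD hpl.1 hx
      have h4 : l.headD 0 ≤ b + 1 := by
        rcases l with _ | ⟨c, t⟩
        · simp
        · exact hb c (List.mem_cons_self)
      omega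
    · rintro ⟨hpl, hlen, hb⟩
      refine ⟨⟨hpl, hlen, fun x hx => le_trans (hb x hx) (by omega)⟩, fun hh => ?_⟩
      have h4 : l.headD 0 ≤ b := by
        rcases l with _ | ⟨c, t⟩
        · simp
        · exact hb c (List.mem_cons_self)
      omega
  have h3 : gfc (fun l => NN (a+1) (b+1) l ∧ l.headD 0 = b+1) List.sum
      = X^(b+1) * Nser a (b+1) := by
    rw [show (X:PowerSeries ℚ)^(b+1) * Nser a (b+1) = X^(b+1) * gfc (NN a (b+1)) List.sum from rfl,
      ← gfc_shift]
    ext n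
    rw [coeff_gfc, coeff_gfc]
    congr 1
    exact Nat.card_congr (nnConsEquiv a b n)
  have h1' : Nser (a+1) (b+1) = gfc (fun l => NN (a+1) (b+1) l ∧ l.headD 0 = b+1) List.sum
      + gfc (fun l => NN (a+1) (b+1) l ∧ ¬ (l.headD 0 = b+1)) List.sum := h1
  rw [h2, h3] at h1'
  rw [h1']
  ring

/-! ### product identities -/

lemma qpoch_zero : qpoch 0 = 1 := by simp [qpoch]

lemma Pser_qpoch : ∀ b, Pser b * qpoch b = 1 := by
  intro b
  induction b with
  | zero => rw [Pser_zero, qpoch_zero, one_mul]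
  | succ b ih =>
    rw [qpoch_succ]
    have hrec := Pser_rec b
    calc Pser (b+1) * (qpoch b * (1 - X^(b+1)))
        = (Pser (b+1) * (1 - X^(b+1))) * qpoch b := by ring
      _ = Pser b * qpoch b := by rw [hrec]
      _ = 1 := ih

lemma Lser_qpoch : ∀ a, Lser a * qpoch a = 1 := by
  intro a
  induction a with
  | zero => rw [Lser_zero, qpoch_zero, one_mul]
  | succ a ih =>
    rw [qpoch_succ]
    have hrec := Lser_rec a
    calc Lser (a+1) * (qpoch a * (1 - X^(a+1)))
        = (Lser (a+1) * (1 - X^(a+1))) * qpoch a := by ring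
      _ = Lser a * qpoch a := by rw [hrec]
      _ = 1 := ih

lemma qpoch_inv_eq_Pser (b : ℕ) : (qpoch b)⁻¹ = Pser b := by
  apply mul_left_cancel₀ (qpoch_ne_zero b)
  rw [PowerSeries.mul_inv_cancel _ (by rw [constantCoeff_qpoch]; exact one_ne_zero)]
  rw [mul_comm, Pser_qpoch]

lemma qpoch_inv_eq_Lser (a : ℕ) : (qpoch a)⁻¹ = Lser a := by
  apply mul_left_cancel₀ (qpoch_ne_zero a)
  rw [PowerSeries.mul_inv_cancel _ (by rw [constantCoeff_qpoch]; exact one_ne_zero)]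
  rw [mul_comm, Lser_qpoch]

lemma Nser_qpoch : ∀ N a b, a + b ≤ N → Nser a b * qpoch a * qpoch b = qpoch (a+b) := by
  intro N
  induction N with
  | zero =>
    intro a b hab
    have ha : a = 0 := by omega
    have hb : b = 0 := by omega
    subst ha; subst hb
    rw [Nser_zero_left, qpoch_zero]
    ring
  | succ N ih =>
    intro a b hab
    rcases Nat.eq_zero_or_pos a with rfl | ha
    · rw [Nser_zero_left, qpoch_zero]
      simp
    rcases Nat.eq_zero_or_pos b with rfl | hb
    · rw [Nser_zero_right, qpoch_zero]
      simp
    obtain ⟨a', rfl⟩ : ∃ a'', a = a'' + 1 := ⟨a - 1, by omega⟩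
    obtain ⟨b', rfl⟩ : ∃ b'', b = b'' + 1 := ⟨b - 1, by omega⟩
    have h1 := ih (a'+1) b' (by omega)
    have h2 := ih a' (b'+1) (by omega)
    have hidx : (a'+1) + (b'+1) = (a'+1+b') + 1 := by omega
    have hidx2 : a' + (b'+1) = a' + b' + 1 := by omega
    have hidx3 : (a'+1) + b' = a' + b' + 1 := by omega
    rw [hidx, qpoch_succ (a'+1+b'), Nser_split, qpoch_succ b', qpoch_succ a']
    rw [hidx2] at h2
    rw [hidx3] at h1
    rw [qpoch_succ a'] at h1
    rw [qpoch_succ b'] at h2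
    have hexp : a' + b' + 1 + 1 = (b'+1) + (a'+1) := by omega
    calc (Nser (a'+1) b' + X^(b'+1) * Nser a' (b'+1)) * (qpoch a' * (1 - X^(a'+1)))
          * (qpoch b' * (1 - X^(b'+1)))
        = (Nser (a'+1) b' * (qpoch a' * (1 - X^(a'+1))) * qpoch b') * (1 - X^(b'+1))
          + X^(b'+1) * (Nser a' (b'+1) * qpoch a' * (qpoch b' * (1 - X^(b'+1))))
            * (1 - X^(a'+1)) := by ring
      _ = qpoch (a'+b'+1) * (1 - X^(b'+1))
          + X^(b'+1) * qpoch (a'+b'+1) * (1 - X^(a'+1)) := by rw [h1, h2]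
      _ = qpoch (a'+1+b') * (1 - X^((a'+1+b')+1)) := by
            rw [hidx3, hexp, pow_add]
            ring

/-! ### the β side -/

lemma BB_card (c : ℕ) (hc : 0 < c) (n : ℕ) :
    Nat.card {l : List ℕ // BB c l ∧ l.sum = n} = if c ∣ n ∧ n ≠ 0 then 1 else 0 := by
  split_ifs with h
  · obtain ⟨⟨k, rfl⟩, hn0⟩ := h
    have hk : 0 < k := by
      rcases Nat.eq_zero_or_pos k with rfl | h
      · simp at hn0
      · exact h
    haveI : Unique {l : List ℕ // BB c l ∧ l.sum = c * k} :=
      { default := ⟨List.replicate k c, ⟨⟨List.pairwise_replicate.mpr (Or.inr le_rfl),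
          fun x hx => by rw [List.eq_of_mem_replicate hx]; exact hc⟩,
          by
            intro hnil
            have := congrArg List.length hnil
            simp at this
            omega,
          fun x hx => List.eq_of_mem_replicate hx⟩, by
            rw [List.sum_replicate, smul_eq_mul]; ring⟩
        uniq := by
          rintro ⟨l, ⟨hpl, hne, hall⟩, hsum⟩
          apply Subtype.ext
          have hrep : l = List.replicate l.length c := List.eq_replicate_iff.mpr ⟨rfl, hall⟩
          have hsum2 : l.sum = l.length * c := by
            rw [hrep]; simp [List.sum_replicate, smul_eq_mul]
          have h5 : c * l.length = c * k := by
            rw [Nat.mul_comm c l.length, ← hsum2, hsum]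
          have hlen : l.length = k := Nat.eq_of_mul_eq_mul_left hc h5
          simp only
          rw [hrep, hlen] }
    rw [Nat.card_unique]
  · haveI : IsEmpty {l : List ℕ // BB c l ∧ l.sum = n} := by
      constructor
      rintro ⟨l, ⟨hpl, hne, hall⟩, hsum⟩
      have hrep : l = List.replicate l.length c := List.eq_replicate_iff.mpr ⟨rfl, hall⟩
      have hsum2 : l.sum = l.length * c := by
        rw [hrep]; simp [List.sum_replicate, smul_eq_mul]
      apply h
      refine ⟨⟨l.length, by rw [← hsum, hsum2, Nat.mul_comm]⟩, ?_⟩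
      intro hn0
      have h6 : l.length * c = 0 := by omega
      rcases Nat.mul_eq_zero.mp h6 with h7 | h7
      · exact hne (List.length_eq_zero_iff.mp h7)
      · omega
    rw [Nat.card_of_isEmpty]

lemma constantCoeff_one_sub_pow' (c : ℕ) (hc : 0 < c) :
    constantCoeff (1 - (X : PowerSeries ℚ)^c) = 1 := by
  obtain ⟨i, rfl⟩ : ∃ i, c = i + 1 := ⟨c - 1, by omega⟩
  exact constantCoeff_one_sub_pow i

lemma one_sub_pow_mul_inv (c : ℕ) (hc : 0 < c) :
    (1 - (X : PowerSeries ℚ)^c) * (1 - (X : PowerSeries ℚ)^c)⁻¹ = 1 :=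
  PowerSeries.mul_inv_cancel _ (by rw [constantCoeff_one_sub_pow' c hc]; exact one_ne_zero)

lemma qpoch_mul_inv (n : ℕ) : qpoch n * (qpoch n)⁻¹ = 1 :=
  PowerSeries.mul_inv_cancel _ (by rw [constantCoeff_qpoch]; exact one_ne_zero)

lemma Bser_eq (c : ℕ) (hc : 0 < c) :
    gfc (BB c) List.sum = X^c * (1 - (X : PowerSeries ℚ)^c)⁻¹ := by
  have key : gfc (BB c) List.sum * (1 - X^c) = X^c := by
    ext n
    rw [mul_sub, mul_one, map_sub, coeff_gfc, BB_card c hc n, coeff_mul_X_pow',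
      coeff_X_pow]
    have hshift : ∀ m : ℕ, (coeff m) (gfc (BB c) List.sum)
        = ((if c ∣ m ∧ m ≠ 0 then 1 else 0 : ℕ) : ℚ) := by
      intro m; rw [coeff_gfc, BB_card c hc m]
    rcases lt_trichotomy n c with hlt | heq | hgt
    · rw [if_neg (by omega : ¬ c ≤ n), if_neg (by omega : ¬ n = c), if_neg ?_]
      · ring
      · rintro ⟨hdvd, hn0⟩
        have := Nat.le_of_dvd (by omega) hdvd
        omega
    · have h0 : n - c = 0 := by omega
      rw [if_pos (show c ∣ n ∧ n ≠ 0 from ⟨by rw [heq], by omega⟩),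
        if_pos (by omega : c ≤ n), hshift, h0, if_neg (by simp), if_pos heq]
      simp
    · rw [if_pos (by omega : c ≤ n), hshift, if_neg (by omega : ¬ n = c)]
      by_cases hdvd : c ∣ n
      · have h1 : c ∣ n - c := Nat.dvd_sub hdvd (dvd_refl c)
        have h2 : n - c ≠ 0 := by
          obtain ⟨k, rfl⟩ := hdvd
          have hk : 2 ≤ k := by
            rcases Nat.lt_or_ge k 2 with h | h
            · interval_cases k <;> omega
            · exact h
          have : 2 * c ≤ c * k := by
            calc 2 * c = c * 2 := by ring
            _ ≤ c * k := Nat.mul_le_mul_left c hk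
          omega
        rw [if_pos ⟨hdvd, by omega⟩, if_pos ⟨h1, h2⟩]
        ring
      · have h1 : ¬ (c ∣ n - c) := by
          intro hd
          apply hdvd
          have : n = (n - c) + c := by omega
          rw [this]
          exact Nat.dvd_add hd (dvd_refl c)
        rw [if_neg (by tauto), if_neg (by tauto)]
        ring
  calc gfc (BB c) List.sum
      = gfc (BB c) List.sum * ((1 - X^c) * (1 - X^c)⁻¹) := by
        rw [one_sub_pow_mul_inv c hc, mul_one]
    _ = (gfc (BB c) List.sum * (1 - X^c)) * (1 - X^c)⁻¹ := by ring
    _ = X^c * (1 - X^c)⁻¹ := by rw [key]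

/-! ### box identity in inverse form -/

lemma Nser_eq (j h : ℕ) (hhj : h ≤ j) :
    Nser h (j - h) = qpoch j * (qpoch h)⁻¹ * (qpoch (j - h))⁻¹ := by
  have hq := Nser_qpoch (h + (j - h)) h (j - h) le_rfl
  have hj : h + (j - h) = j := by omega
  rw [hj] at hq
  calc Nser h (j - h)
      = Nser h (j - h) * (qpoch h * (qpoch h)⁻¹) * (qpoch (j-h) * (qpoch (j-h))⁻¹) := by
        rw [qpoch_mul_inv, qpoch_mul_inv]; ring
    _ = (Nser h (j - h) * qpoch h * qpoch (j-h)) * (qpoch h)⁻¹ * (qpoch (j-h))⁻¹ := by ring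
    _ = qpoch j * (qpoch h)⁻¹ * (qpoch (j - h))⁻¹ := by rw [hq]

end SPTAux


namespace SPTAux

lemma char_lemma (m j h : ℕ) (l : List ℕ) (hpl : IsPartitionList l) :
    ((m : ℤ) ∈ rankSet l ∧ mDurfeeWidth (m : ℤ) l = j ∧ hMax (m : ℤ) l j = h)
      ↔ (pt l (m+j) = j ∧ h ≤ pt l (m+j+h) ∧ pt l (m+j+1+h) ≤ h) := by
  have hs := hpl.1
  have hB : ∀ i : ℕ, pt l i ≤ l.headD 0 + l.length := fun i =>
    le_trans (pt_le_headD hs i) (by omega)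
  have hpredw : ∀ j' : ℕ,
      (0 < (m:ℤ) + (j':ℕ) ∧ ((j':ℕ):ℤ) ≤ (part l ((m:ℤ) + (j':ℕ)).toNat : ℤ))
        ↔ (0 < m + j' ∧ j' ≤ pt l (m + j' - 1)) := by
    intro j'
    have ht : ((m:ℤ) + (j':ℕ)).toNat = m + j' := by omega
    rw [ht, part_eq_pt]
    constructor
    · rintro ⟨h1, h2⟩; exact ⟨by omega, by exact_mod_cast h2⟩
    · rintro ⟨h1, h2⟩; exact ⟨by omega, by exact_mod_cast h2⟩
  have hpredh : ∀ h' : ℕ,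
      (0 < (m:ℤ) + (j:ℕ) + 1 + (h':ℕ) ∧ ((h':ℕ):ℤ) ≤ (part l ((m:ℤ) + j + 1 + h').toNat : ℤ))
        ↔ h' ≤ pt l (m + j + h') := by
    intro h'
    have ht : ((m:ℤ) + (j:ℕ) + 1 + (h':ℕ)).toNat = m + j + 1 + h' := by omega
    rw [ht, part_eq_pt]
    have hidx : m + j + 1 + h' - 1 = m + j + h' := by omega
    rw [hidx]
    constructor
    · rintro ⟨_, h2⟩; exact_mod_cast h2
    · intro h2; exact ⟨by omega, by exact_mod_cast h2⟩
  constructor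
  · rintro ⟨hrank, hwidth, hhmax⟩
    rw [mDurfeeWidth, Nat.findGreatest_eq_iff] at hwidth
    obtain ⟨hjB, hPj, hmaxj⟩ := hwidth
    rw [hMax, Nat.findGreatest_eq_iff] at hhmax
    obtain ⟨hhB, hPh, hmaxh⟩ := hhmax
    obtain ⟨j0, hj0⟩ := hrank
    have hjm : m ≤ j0 ∧ pt l j0 = j0 - m := by
      rw [part_eq_pt] at hj0
      have hidx : j0 + 1 - 1 = j0 := by omega
      rw [hidx] at hj0
      omega
    have key : pt l (m+j) = j := by
      rcases lt_trichotomy j0 (m+j) with hlt | heqq | hgt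
      · exfalso
        have hj1 : j ≠ 0 := by omega
        have hPdj := (hpredw j).mp (hPj hj1)
        have hanti : pt l (m + j - 1) ≤ pt l j0 := pt_anti hs (by omega)
        omega
      · rw [heqq] at hjm
        omega
      · exfalso
        have h1 : j + 1 ≤ pt l (m + j) := by
          have hanti : pt l (m+j) ≥ pt l j0 := pt_anti hs (by omega)
          omega
        have h2 : j + 1 ≤ l.headD 0 + l.length := le_trans h1 (hB _)
        have h3 := hmaxj (n := j+1) (by omega) h2
        rw [hpredw (j+1)] at h3
        have hidx : m + (j+1) - 1 = m + j := by omega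
        rw [hidx] at h3
        push_neg at h3
        have := h3 (by omega)
        omega
    refine ⟨key, ?_, ?_⟩
    · rcases Nat.eq_zero_or_pos h with rfl | hh
      · omega
      · have := (hpredh h).mp (hPh (by omega))
        exact this
    · by_contra hcon
      push_neg at hcon
      have h1 : h + 1 ≤ pt l (m + j + (h+1)) := by
        have : m + j + (h+1) = m + j + 1 + h := by omega
        rw [this]
        omega
      have h2 : h + 1 ≤ l.headD 0 + l.length := le_trans h1 (hB _)
      have h3 := hmaxh (n := h+1) (by omega) h2
      rw [hpredh (h+1)] at h3
      exact h3 h1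
  · rintro ⟨hc1, hc2, hc3⟩
    refine ⟨⟨m + j, ?_⟩, ?_, ?_⟩
    · rw [part_eq_pt]
      have hidx : m + j + 1 - 1 = m + j := by omega
      rw [hidx, hc1]
      push_cast
      ring
    · rw [mDurfeeWidth, Nat.findGreatest_eq_iff]
      refine ⟨?_, ?_, ?_⟩
      · rcases Nat.eq_zero_or_pos j with rfl | hj
        · omega
        · have hlen := lt_length_of_pt_pos (l := l) (i := m+j) (by omega)
          omega
      · intro hj0
        rw [hpredw j]
        have : pt l (m+j) ≤ pt l (m+j-1) := pt_anti hs (by omega)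
        exact ⟨by omega, by omega⟩
      · intro t ht htB
        rw [hpredw t]
        push_neg
        intro _
        have : pt l (m + t - 1) ≤ pt l (m + j) := pt_anti hs (by omega)
        omega
    · rw [hMax, Nat.findGreatest_eq_iff]
      refine ⟨?_, ?_, ?_⟩
      · rcases Nat.eq_zero_or_pos h with rfl | hh
        · omega
        · have hlen := lt_length_of_pt_pos (l := l) (i := m+j+h) (by omega)
          omega
      · intro hh0
        rw [hpredh h]
        exact hc2
      · intro t ht htB
        rw [hpredh t]
        intro hcon2
        have : pt l (m + j + t) ≤ pt l (m + j + 1 + h) := pt_anti hs (by omega)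
        omega

/-! ### extra helpers for the main bijection -/

lemma pad_mem_ge (c k : ℕ) (l : List ℕ) : ∀ x ∈ pad c k l, c ≤ x := by
  intro x hx
  rcases List.mem_append.mp hx with hx | hx
  · rcases List.mem_map.mp hx with ⟨z, _, rfl⟩; omega
  · have := List.eq_of_mem_replicate hx; omega

lemma mem_take_imp {l : List ℕ} {k x : ℕ} (hx : x ∈ l.take k) :
    ∃ i, i < k ∧ i < l.length ∧ x = pt l i := by
  rw [List.mem_iff_getElem] at hx
  obtain ⟨i, hi, heq⟩ := hx
  rw [List.length_take] at hi
  have hil : i < l.length := by omega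
  refine ⟨i, by omega, hil, ?_⟩
  rw [pt_eq_get l hil, ← heq, List.getElem_take]

lemma mem_drop_imp {l : List ℕ} {k x : ℕ} (hx : x ∈ l.drop k) :
    ∃ i, k + i < l.length ∧ x = pt l (k + i) := by
  rw [List.mem_iff_getElem] at hx
  obtain ⟨i, hi, heq⟩ := hx
  have hlen : k + i < l.length := by
    have : (l.drop k).length = l.length - k := List.length_drop
    omega
  refine ⟨i, hlen, ?_⟩
  rw [← heq, ← pt_eq_get (l.drop k) hi, pt_drop]

lemma mem_strip_imp {c : ℕ} {l : List ℕ} {x : ℕ} (hx : x ∈ strip c l) :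
    ∃ y ∈ l, x = y - c := by
  have h1 := List.mem_of_mem_filter hx
  rcases List.mem_map.mp h1 with ⟨y, hy, rfl⟩
  exact ⟨y, hy, rfl⟩

lemma pt_le_of_all {l : List ℕ} {b : ℕ} (hb : ∀ x ∈ l, x ≤ b) (i : ℕ) : pt l i ≤ b := by
  rcases lt_or_ge i l.length with h | h
  · exact hb _ (pt_mem h)
  · rw [pt_eq_zero l h]; omega

lemma pt_pad (c k : ℕ) (γ : List ℕ) {i : ℕ} (h1 : γ.length ≤ i) (h2 : i < γ.length + k) :
    pt (pad c k γ) i = c := by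
  unfold pad
  have hi : i = (γ.map (· + c)).length + (i - γ.length) := by simp; omega
  rw [hi, pt_append_right]
  have : i - γ.length < k := by omega
  rw [pt_eq_get _ (by rw [List.length_replicate]; omega)]
  exact List.getElem_replicate ..

lemma pad_succ (c k : ℕ) (l : List ℕ) : pad c (k+1) l = pad c k l ++ [c] := by
  unfold pad
  rw [List.replicate_succ', List.append_assoc]

/-! ### the structural conditions -/

def AC (m j h : ℕ) (l : List ℕ) : Prop :=
  IsPartitionList l ∧ pt l (m+j) = j ∧ h ≤ pt l (m+j+h) ∧ pt l (m+j+1+h) ≤ h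

def TT (m j h : ℕ) (t : List ℕ × List ℕ × List ℕ) : Prop :=
  LL (m+j) t.1 ∧ NN h (j-h) t.2.1 ∧ PP h t.2.2

def fwd (m j h : ℕ) (l : List ℕ) : List ℕ × List ℕ × List ℕ :=
  (strip j (l.take (m+j)), strip h ((l.drop (m+j+1)).take h), l.drop (m+j+1+h))

def bwd (m j h : ℕ) (t : List ℕ × List ℕ × List ℕ) : List ℕ :=
  pad j (m+j+1 - t.1.length) t.1 ++ (pad h (h - t.2.1.length) t.2.1 ++ t.2.2)

section Main
variable {m j h : ℕ}

lemma fwd_spec (hj : 1 ≤ j) {l : List ℕ} (hA : AC m j h l) :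
    TT m j h (fwd m j h l) ∧
      (fwd m j h l).1.sum + ((fwd m j h l).2.1.sum + (fwd m j h l).2.2.sum)
        + ((m+j)*j + j + h*h) = l.sum := by
  obtain ⟨⟨hs, hp⟩, hA1, hA2, hA3⟩ := hA
  have hlen1 : m + j < l.length := lt_length_of_pt_pos (l := l) (i := m+j) (by omega)
  have htake_len : (l.take (m+j)).length = m + j := by rw [List.length_take]; omega
  have htake_sorted : (l.take (m+j)).Pairwise (· ≥ ·) := hs.sublist (List.take_sublist _ _)
  have htake_ge : ∀ x ∈ l.take (m+j), j ≤ x := by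
    intro x hx
    obtain ⟨i, hik, hil, rfl⟩ := mem_take_imp hx
    have := pt_anti hs (show i ≤ m+j by omega)
    omega
  have hδlen : h ≤ (l.drop (m+j+1)).length := by
    rcases Nat.eq_zero_or_pos h with rfl | hh
    · omega
    · have : m + j + h < l.length := lt_length_of_pt_pos (l := l) (i := m+j+h) (by omega)
      rw [List.length_drop]
      omega
  have hδ_sorted : (l.drop (m+j+1)).Pairwise (· ≥ ·) := hs.sublist (List.drop_sublist _ _)
  have htake2_len : ((l.drop (m+j+1)).take h).length = h := by
    rw [List.length_take]; omega
  have htake2_sorted : ((l.drop (m+j+1)).take h).Pairwise (· ≥ ·) :=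
    hδ_sorted.sublist (List.take_sublist _ _)
  have htake2_ge : ∀ x ∈ (l.drop (m+j+1)).take h, h ≤ x := by
    intro x hx
    obtain ⟨i, hik, hil, rfl⟩ := mem_take_imp hx
    rw [pt_drop]
    have := pt_anti hs (show m+j+1+i ≤ m+j+h by omega)
    omega
  have htake2_le : ∀ x ∈ (l.drop (m+j+1)).take h, x ≤ j := by
    intro x hx
    obtain ⟨i, hik, hil, rfl⟩ := mem_take_imp hx
    rw [pt_drop]
    have := pt_anti hs (show m+j ≤ m+j+1+i by omega)
    omega
  constructor
  · refine ⟨⟨⟨strip_sorted htake_sorted j, strip_pos j _⟩,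
      le_trans (length_strip_le _ _) (le_of_eq htake_len)⟩,
      ⟨⟨strip_sorted htake2_sorted h, strip_pos h _⟩,
        le_trans (length_strip_le _ _) (le_of_eq htake2_len), ?_⟩,
      ⟨hs.sublist (List.drop_sublist _ _), fun x hx => hp x ((List.drop_sublist _ _).subset hx)⟩, ?_⟩
    · intro x hx
      obtain ⟨y, hy, rfl⟩ := mem_strip_imp hx
      have := htake2_le y hy
      omega
    · intro x hx
      obtain ⟨i, hil, rfl⟩ := mem_drop_imp hx
      have := pt_anti hs (show m+j+1+h ≤ m+j+1+h+i by omega)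
      omega
  · have hsum1 : (strip j (l.take (m+j))).sum + j * (m+j) = (l.take (m+j)).sum := by
      have := sum_strip htake_ge
      rw [htake_len] at this
      exact this
    have hsum2 : (strip h ((l.drop (m+j+1)).take h)).sum + h * h
        = ((l.drop (m+j+1)).take h).sum := by
      have := sum_strip htake2_ge
      rw [htake2_len] at this
      exact this
    have hsplit1 : l.sum = (l.take (m+j)).sum + (l.drop (m+j)).sum :=
      (List.sum_take_add_sum_drop l (m+j)).symm
    have hdropcons : l.drop (m+j) = pt l (m+j) :: l.drop (m+j+1) := by
      rw [pt_eq_get l hlen1]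
      exact List.drop_eq_getElem_cons hlen1
    have hsplit2 : (l.drop (m+j+1)).sum
        = ((l.drop (m+j+1)).take h).sum + (((l.drop (m+j+1)).drop h)).sum :=
      (List.sum_take_add_sum_drop _ h).symm
    have hdd : (l.drop (m+j+1)).drop h = l.drop (m+j+1+h) := by
      rw [List.drop_drop]
      try (congr 1; omega)
    rw [hdropcons] at hsplit1
    rw [hdd] at hsplit2
    simp only [List.sum_cons, hA1] at hsplit1
    have hcomm : (m+j)*j = j*(m+j) := Nat.mul_comm _ _
    unfold fwd
    simp only
    omega

lemma bwd_spec (hj : 1 ≤ j) (hhj : h ≤ j) {t : List ℕ × List ℕ × List ℕ}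
    (hT : TT m j h t) :
    AC m j h (bwd m j h t) ∧
      (bwd m j h t).sum
        = t.1.sum + (t.2.1.sum + t.2.2.sum) + ((m+j)*j + j + h*h) := by
  obtain ⟨⟨⟨hγs, hγp⟩, hγl⟩, ⟨⟨hμs, hμp⟩, hμl, hμb⟩, ⟨hνs, hνp⟩, hνb⟩ := hT
  set γ := t.1 with hγ
  set μ := t.2.1 with hμ
  set ν := t.2.2 with hν
  set A := pad j (m+j+1 - γ.length) γ with hA
  set B := pad h (h - μ.length) μ with hB
  have hAlen : A.length = m+j+1 := by rw [hA, pad_length]; omega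
  have hBlen : B.length = h := by rw [hB, pad_length]; omega
  have hA_ge : ∀ x ∈ A, j ≤ x := pad_mem_ge _ _ _
  have hB_ge : ∀ x ∈ B, h ≤ x := pad_mem_ge _ _ _
  have hB_le : ∀ x ∈ B, x ≤ j := pad_mem_le hhj (fun x hx => by have := hμb x hx; omega)
  have hA_sorted : A.Pairwise (· ≥ ·) := pad_sorted hγs _ _
  have hA_pos : ∀ x ∈ A, 0 < x := pad_pos j (fun _ => by omega) hγp
  have hB_sorted : B.Pairwise (· ≥ ·) := pad_sorted hμs _ _
  have hB_pos : ∀ x ∈ B, 0 < x := pad_pos h (fun hk => by omega) hμp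
  have hBν_sorted : (B ++ ν).Pairwise (· ≥ ·) := by
    rw [List.pairwise_append]
    exact ⟨hB_sorted, hνs, fun x hx y hy => le_trans (hνb y hy) (hB_ge x hx)⟩
  have hbwd : bwd m j h t = A ++ (B ++ ν) := rfl
  have hsorted : (A ++ (B ++ ν)).Pairwise (· ≥ ·) := by
    rw [List.pairwise_append]
    refine ⟨hA_sorted, hBν_sorted, fun x hx y hy => ?_⟩
    rcases List.mem_append.mp hy with hy | hy
    · exact le_trans (hB_le y hy) (hA_ge x hx)
    · exact le_trans (le_trans (hνb y hy) hhj) (hA_ge x hx)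
  have hpos : ∀ x ∈ A ++ (B ++ ν), 0 < x := by
    intro x hx
    rcases List.mem_append.mp hx with hx | hx
    · exact hA_pos x hx
    · rcases List.mem_append.mp hx with hx | hx
      · exact hB_pos x hx
      · exact hνp x hx
  have hc1 : pt (A ++ (B ++ ν)) (m+j) = j := by
    rw [pt_append_left (by omega)]
    exact pt_pad _ _ _ (by omega) (by omega)
  have hc2 : h ≤ pt (A ++ (B ++ ν)) (m+j+h) := by
    rcases Nat.eq_zero_or_pos h with rfl | hh
    · omega
    · have hidx : m+j+h = A.length + (h-1) := by omega
      rw [hidx, pt_append_right, pt_append_left (by omega)]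
      exact hB_ge _ (pt_mem (by omega))
  have hc3 : pt (A ++ (B ++ ν)) (m+j+1+h) ≤ h := by
    have hkey : pt (B ++ ν) h = pt ν 0 := by
      have hthis := pt_append_right B ν 0
      rw [Nat.add_zero, hBlen] at hthis
      exact hthis
    have hidx : m+j+1+h = A.length + h := by omega
    rw [hidx, pt_append_right, hkey]
    exact pt_le_of_all hνb 0
  refine ⟨⟨⟨hsorted, hpos⟩, hc1, hc2, hc3⟩, ?_⟩
  rw [hbwd, List.sum_append, List.sum_append, hA, hB, sum_pad, sum_pad]
  have e1 : γ.length + (m+j+1-γ.length) = m+j+1 := by omega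
  have e2 : μ.length + (h-μ.length) = h := by omega
  rw [e1, e2]
  have e3 : j * (m+j+1) = (m+j)*j + j := by ring
  omega

lemma fwd_bwd (hj : 1 ≤ j) (hhj : h ≤ j) {t : List ℕ × List ℕ × List ℕ}
    (hT : TT m j h t) : fwd m j h (bwd m j h t) = t := by
  obtain ⟨γ, μ, ν⟩ := t
  obtain ⟨⟨⟨hγs, hγp⟩, hγl⟩, ⟨⟨hμs, hμp⟩, hμl, hμb⟩, ⟨hνs, hνp⟩, hνb⟩ := hT
  dsimp only at hγs hγp hγl hμs hμp hμl hμb hνs hνp hνb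
  set A := pad j (m+j+1 - γ.length) γ with hA
  set B := pad h (h - μ.length) μ with hB
  have hAlen : A.length = m+j+1 := by rw [hA, pad_length]; omega
  have hBlen : B.length = h := by rw [hB, pad_length]; omega
  have hbwd : bwd m j h (γ, μ, ν) = A ++ (B ++ ν) := rfl
  have hd1 : (A ++ (B ++ ν)).drop (m+j+1) = B ++ ν := by
    rw [← hAlen, List.drop_left]
  have comp1 : strip j ((A ++ (B ++ ν)).take (m+j)) = γ := by
    rw [List.take_append_of_le_length (by omega)]
    have htA : A.take (m+j) = pad j (m+j-γ.length) γ := by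
      rw [hA]
      unfold pad
      rw [List.take_append]
      rw [List.take_of_length_le (by simp; omega), List.take_replicate]
      simp only [List.length_map]
      congr 2
      omega
    rw [htA, strip_pad _ _ hγp]
  have comp2 : strip h (((A ++ (B ++ ν)).drop (m+j+1)).take h) = μ := by
    rw [hd1, List.take_append_of_le_length (by omega), List.take_of_length_le (by omega)]
    rw [hB, strip_pad _ _ hμp]
  have comp3 : (A ++ (B ++ ν)).drop (m+j+1+h) = ν := by
    have hsplit : (A ++ (B ++ ν)).drop (m+j+1+h) = ((A ++ (B ++ ν)).drop (m+j+1)).drop h := by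
      rw [List.drop_drop]
      try (congr 1; omega)
    rw [hsplit, hd1, ← hBlen, List.drop_left]
  rw [hbwd]
  unfold fwd
  rw [comp1, comp2, comp3]

lemma bwd_fwd (hj : 1 ≤ j) {l : List ℕ} (hA : AC m j h l) :
    bwd m j h (fwd m j h l) = l := by
  obtain ⟨⟨hs, hp⟩, hA1, hA2, hA3⟩ := hA
  have hlen1 : m + j < l.length := lt_length_of_pt_pos (l := l) (i := m+j) (by omega)
  have htake_len : (l.take (m+j)).length = m + j := by rw [List.length_take]; omega
  have htake_sorted : (l.take (m+j)).Pairwise (· ≥ ·) := hs.sublist (List.take_sublist _ _)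
  have htake_ge : ∀ x ∈ l.take (m+j), j ≤ x := by
    intro x hx
    obtain ⟨i, hik, hil, rfl⟩ := mem_take_imp hx
    have := pt_anti hs (show i ≤ m+j by omega)
    omega
  have hδlen : h ≤ (l.drop (m+j+1)).length := by
    rcases Nat.eq_zero_or_pos h with rfl | hh
    · omega
    · have : m + j + h < l.length := lt_length_of_pt_pos (l := l) (i := m+j+h) (by omega)
      rw [List.length_drop]
      omega
  have hδ_sorted : (l.drop (m+j+1)).Pairwise (· ≥ ·) := hs.sublist (List.drop_sublist _ _)
  have htake2_len : ((l.drop (m+j+1)).take h).length = h := by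
    rw [List.length_take]; omega
  have htake2_sorted : ((l.drop (m+j+1)).take h).Pairwise (· ≥ ·) :=
    hδ_sorted.sublist (List.take_sublist _ _)
  have htake2_ge : ∀ x ∈ (l.drop (m+j+1)).take h, h ≤ x := by
    intro x hx
    obtain ⟨i, hik, hil, rfl⟩ := mem_take_imp hx
    rw [pt_drop]
    have := pt_anti hs (show m+j+1+i ≤ m+j+h by omega)
    omega
  set γ := strip j (l.take (m+j)) with hγ
  set μ := strip h ((l.drop (m+j+1)).take h) with hμ
  have hγlen : γ.length ≤ m + j := by
    rw [hγ]
    exact le_trans (length_strip_le _ _) (le_of_eq htake_len)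
  have hμlen : μ.length ≤ h := by
    rw [hμ]
    exact le_trans (length_strip_le _ _) (le_of_eq htake2_len)
  have hApad : pad j (m+j+1 - γ.length) γ = l.take (m+j) ++ [j] := by
    have hk : m+j+1 - γ.length = (m+j - γ.length) + 1 := by omega
    rw [hk, pad_succ]
    congr 1
    have hps := pad_strip htake_sorted htake_ge
    rw [htake_len, ← hγ] at hps
    exact hps
  have hAtake : l.take (m+j) ++ [j] = l.take (m+j+1) := by
    rw [List.take_succ, List.getElem?_eq_getElem hlen1]
    have : l[m+j] = j := by rw [← pt_eq_get l hlen1]; exact hA1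
    rw [this]
    rfl
  have hBpad : pad h (h - μ.length) μ = (l.drop (m+j+1)).take h := by
    have hps := pad_strip htake2_sorted htake2_ge
    rw [htake2_len, ← hμ] at hps
    exact hps
  have hdd : ((l.drop (m+j+1)).take h) ++ l.drop (m+j+1+h) = l.drop (m+j+1) := by
    have hsplit : (l.drop (m+j+1)).drop h = l.drop (m+j+1+h) := by
      rw [List.drop_drop]
      try (congr 1; omega)
    rw [← hsplit]
    exact List.take_append_drop _ _
  show pad j (m+j+1 - γ.length) γ ++ (pad h (h - μ.length) μ ++ l.drop (m+j+1+h)) = l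
  rw [hApad, hAtake, hBpad, hdd]
  exact List.take_append_drop _ _


end Main

noncomputable def bigEquiv (m j h n : ℕ) (hj : 1 ≤ j) (hhj : h ≤ j) :
    {l : List ℕ // AC m j h l ∧ l.sum = n} ≃
    {t : List ℕ × List ℕ × List ℕ // TT m j h t ∧
      t.1.sum + (t.2.1.sum + t.2.2.sum) + ((m+j)*j + j + h*h) = n} where
  toFun l := ⟨fwd m j h l.1, (fwd_spec hj l.2.1).1, by
    have hsp := (fwd_spec hj l.2.1).2
    rw [l.2.2] at hsp
    exact hsp⟩
  invFun t := ⟨bwd m j h t.1, (bwd_spec hj hhj t.2.1).1, by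
    rw [(bwd_spec hj hhj t.2.1).2]
    exact t.2.2⟩
  left_inv l := Subtype.ext (bwd_fwd hj l.2.1)
  right_inv t := Subtype.ext (fwd_bwd hj hhj t.2.1)

lemma finite_pairP {P Q : List ℕ → Prop} (hP : ∀ l, P l → IsPartitionList l)
    (hQ : ∀ l, Q l → IsPartitionList l) (n : ℕ) :
    Finite {z : List ℕ × List ℕ // (P z.1 ∧ Q z.2) ∧ z.1.sum + z.2.sum = n} := by
  haveI := finite_bounded n
  refine Finite.of_injective (fun z => ((⟨z.1.1, hP _ z.2.1.1, by have := z.2.2; omega⟩ :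
      {l : List ℕ // IsPartitionList l ∧ l.sum ≤ n}),
    (⟨z.1.2, hQ _ z.2.1.2, by have := z.2.2; omega⟩ :
      {l : List ℕ // IsPartitionList l ∧ l.sum ≤ n}))) ?_
  intro a b hab
  apply Subtype.ext
  have h1 : a.1.1 = b.1.1 := congrArg (fun p => p.1.1) hab
  have h2 : a.1.2 = b.1.2 := congrArg (fun p => p.2.1) hab
  exact Prod.ext h1 h2

lemma alphaGF (m j h : ℕ) (hhj : h ≤ j) :
    gfc (AC m j h) List.sum
      = X ^ ((m+j)*j + j + h*h) * (Lser (m+j) * (Nser h (j-h) * Pser h)) := by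
  rcases Nat.eq_zero_or_pos j with rfl | hj
  · have hh : h = 0 := by omega
    subst hh
    have e1 : gfc (AC m 0 0) List.sum = Lser m := by
      apply gfc_congr
      intro l
      constructor
      · rintro ⟨hpl, h1, _, _⟩
        refine ⟨hpl, ?_⟩
        by_contra hcon
        push_neg at hcon
        have := pt_pos hpl.2 (i := m+0) (by omega)
        omega
      · rintro ⟨hpl, hlen⟩
        have hz : pt l (m+0) = 0 := pt_eq_zero l (by omega)
        have hz2 : pt l (m+0+1+0) = 0 := pt_eq_zero l (by omega)
        exact ⟨hpl, by omega, by omega, by omega⟩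
    rw [e1, Nser_zero_left, Pser_zero]
    norm_num
  · have step1 : gfc (AC m j h) List.sum
        = gfc (TT m j h)
            (fun t => t.1.sum + (t.2.1.sum + t.2.2.sum) + ((m+j)*j + j + h*h)) := by
      ext n
      rw [coeff_gfc, coeff_gfc]
      congr 1
      exact Nat.card_congr (bigEquiv m j h n hj hhj)
    rw [step1, gfc_shift (TT m j h) (fun t => t.1.sum + (t.2.1.sum + t.2.2.sum)) _]
    congr 1
    symm
    calc Lser (m+j) * (Nser h (j-h) * Pser h)
        = gfc (LL (m+j)) List.sum * (gfc (NN h (j-h)) List.sum * gfc (PP h) List.sum) := rfl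
      _ = gfc (LL (m+j)) List.sum *
            gfc (fun z : List ℕ × List ℕ => NN h (j-h) z.1 ∧ PP h z.2)
              (fun z => z.1.sum + z.2.sum) := by
          rw [gfc_mul _ _ _ _ (finNN _ _) (finPP _)]
      _ = gfc (fun z : List ℕ × (List ℕ × List ℕ) =>
              LL (m+j) z.1 ∧ (NN h (j-h) z.2.1 ∧ PP h z.2.2))
            (fun z => z.1.sum + (z.2.1.sum + z.2.2.sum)) := by
          have hthis := gfc_mul (LL (m+j))
            (fun z : List ℕ × List ℕ => NN h (j-h) z.1 ∧ PP h z.2)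
            List.sum (fun z => z.1.sum + z.2.sum) (finLL _)
            (fun n => finite_pairP (fun l hl => hl.1) (fun l hl => hl.1) n)
          exact hthis
      _ = gfc (TT m j h) (fun t => t.1.sum + (t.2.1.sum + t.2.2.sum)) := rfl

end SPTAux

/-- Equation (2.28): for fixed `m ≥ 0` and `0 ≤ h ≤ j`, the generating function for pairs
of partitions `(α, β)` with `β` nonempty with all parts equal to `j+m+1+h`, `m` in the
rank-set of `α`, `j` the width of the `m`-Durfee rectangle of `α`, and `h` the maximum
integer with `α_{j+m+1+h} ≥ h`, is
`q^{(m+j)j} q^j q^{h²} [j choose h]_q / ((q;q)_h (q;q)_{m+j}) · q^{h+j+m+1}/(1-q^{m+1+j+h})`. -/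
theorem genfun_V_jh (m j h : ℕ) (hhj : h ≤ j) :
    (PowerSeries.mk (fun n =>
      (Nat.card {ab : List ℕ × List ℕ //
        IsPartitionList ab.1 ∧ IsPartitionList ab.2 ∧ ab.2 ≠ [] ∧
        (∀ x ∈ ab.2, x = j + m + 1 + h) ∧
        (m : ℤ) ∈ rankSet ab.1 ∧
        mDurfeeWidth m ab.1 = j ∧ hMax m ab.1 j = h ∧
        ab.1.sum + ab.2.sum = n} : ℚ)) : PowerSeries ℚ)
    = X ^ ((m + j) * j) * X ^ j * X ^ (h ^ 2) * gauss j h *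
        (qpoch h)⁻¹ * (qpoch (m + j))⁻¹ *
        X ^ (h + j + m + 1) * (1 - (X : PowerSeries ℚ) ^ (m + 1 + j + h))⁻¹ := by
  classical
  have hc0 : 0 < j + m + 1 + h := by omega
  -- the two single-partition predicates
  set PA : List ℕ → Prop := fun a =>
    IsPartitionList a ∧ ((m : ℤ) ∈ rankSet a ∧ mDurfeeWidth (m : ℤ) a = j
      ∧ hMax (m : ℤ) a j = h) with hPA
  set QB : List ℕ → Prop := SPTAux.BB (j + m + 1 + h) with hQB
  have finPA : ∀ n, Finite {a : List ℕ // PA a ∧ a.sum = n} :=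
    fun n => SPTAux.finite_sub (fun l hl => hl.1) n
  have finQB : ∀ n, Finite {b : List ℕ // QB b ∧ b.sum = n} :=
    fun n => SPTAux.finite_sub (fun l hl => hl.1) n
  have step1 : (PowerSeries.mk (fun n =>
      (Nat.card {ab : List ℕ × List ℕ //
        IsPartitionList ab.1 ∧ IsPartitionList ab.2 ∧ ab.2 ≠ [] ∧
        (∀ x ∈ ab.2, x = j + m + 1 + h) ∧
        (m : ℤ) ∈ rankSet ab.1 ∧
        mDurfeeWidth m ab.1 = j ∧ hMax m ab.1 j = h ∧
        ab.1.sum + ab.2.sum = n} : ℚ)) : PowerSeries ℚ)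
      = SPTAux.gfc (fun ab : List ℕ × List ℕ => PA ab.1 ∧ QB ab.2)
          (fun ab => ab.1.sum + ab.2.sum) := by
    ext n
    rw [PowerSeries.coeff_mk, SPTAux.coeff_gfc]
    congr 1
    apply Nat.card_congr
    apply Equiv.subtypeEquivRight
    intro ab
    constructor
    · rintro ⟨h1, h2, h3, h4, h5, h6, h7, h8⟩
      exact ⟨⟨⟨h1, h5, h6, h7⟩, ⟨h2, h3, h4⟩⟩, h8⟩
    · rintro ⟨⟨⟨h1, h5, h6, h7⟩, ⟨h2, h3, h4⟩⟩, h8⟩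
      exact ⟨h1, h2, h3, h4, h5, h6, h7, h8⟩
  rw [step1]
  have step2 : SPTAux.gfc (fun ab : List ℕ × List ℕ => PA ab.1 ∧ QB ab.2)
      (fun ab => ab.1.sum + ab.2.sum)
      = SPTAux.gfc PA List.sum * SPTAux.gfc QB List.sum :=
    (SPTAux.gfc_mul PA QB List.sum List.sum finPA finQB).symm
  rw [step2]
  have step3 : SPTAux.gfc PA List.sum = SPTAux.gfc (SPTAux.AC m j h) List.sum := by
    apply SPTAux.gfc_congr
    intro a
    constructor
    · rintro ⟨hpl, hr⟩
      have hch := (SPTAux.char_lemma m j h a hpl).mp hr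
      exact ⟨hpl, hch.1, hch.2.1, hch.2.2⟩
    · rintro ⟨hpl, h1, h2, h3⟩
      exact ⟨hpl, (SPTAux.char_lemma m j h a hpl).mpr ⟨h1, h2, h3⟩⟩
  have step4 : SPTAux.gfc QB List.sum
      = X ^ (j+m+1+h) * (1 - (X : PowerSeries ℚ) ^ (j+m+1+h))⁻¹ :=
    SPTAux.Bser_eq (j+m+1+h) hc0
  rw [step3, step4, SPTAux.alphaGF m j h hhj]
  -- now pure algebra
  have e1 : gauss j h = SPTAux.Nser h (j - h) := by
    rw [SPTAux.Nser_eq j h hhj, gauss]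
  have e2 : (qpoch h)⁻¹ = SPTAux.Pser h := SPTAux.qpoch_inv_eq_Pser h
  have e3 : (qpoch (m+j))⁻¹ = SPTAux.Lser (m+j) := SPTAux.qpoch_inv_eq_Lser (m+j)
  have e4 : (X : PowerSeries ℚ) ^ (h + j + m + 1) = X ^ (j+m+1+h) := by
    rw [show h + j + m + 1 = j+m+1+h from by omega]
  have e5 : (1 - (X : PowerSeries ℚ) ^ (m + 1 + j + h))⁻¹
      = (1 - (X : PowerSeries ℚ) ^ (j+m+1+h))⁻¹ := by
    rw [show m + 1 + j + h = j+m+1+h from by omega]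
  have e6 : (X : PowerSeries ℚ) ^ ((m+j)*j + j + h*h)
      = X ^ ((m+j)*j) * X ^ j * X ^ (h^2) := by
    rw [← pow_add, ← pow_add]
    congr 1
    rw [show h*h = h^2 from by ring]
  rw [e1, e2, e3, e4, e5, e6]
  ring
end
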